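/- arXiv:1703.04994 — 5 statements merged into one kernel-verified Lean document; each statement's English description precedes it below -/
import Mathlib

section
/- (Brunk–Prohorov theorem, dimension one.) Let q ≥ 1 be an integer and let {ξ_k : k ≥ 1} be independent random variables with E ξ_k = 0 and E ξ_k^{2q} < ∞ for all k. If Σ_{k=1}^∞ E ξ_k^{2q} / k^{q+1} < ∞, then ζ_n / n → 0 almost surely as n → ∞, where ζ_n = ξ_1 + ⋯ + ξ_n. -/
open MeasureTheory ProbabilityTheory Finset Filter
open scoped ENNReal NNReal

namespace BrunkAux

/-- Young's inequality, natural-power form. -/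
lemma young_nat {a b : ℝ} (ha : 0 ≤ a) (hb : 0 ≤ b) {m : ℕ} (hm : 1 ≤ m) :
    (m : ℝ) * (a * b ^ (m - 1)) ≤ a ^ m + ((m : ℝ) - 1) * b ^ m := by
  have hm0 : (m : ℝ) ≠ 0 := by positivity
  have key := Real.geom_mean_le_arith_mean2_weighted
    (by positivity : (0:ℝ) ≤ 1/m) (by
      have : (1:ℝ) ≤ m := by exact_mod_cast hm
      have : (0:ℝ) ≤ 1 - 1/m := by
        rw [sub_nonneg, div_le_one (by positivity)]; linarith
      exact this)
    (by positivity : (0:ℝ) ≤ a ^ m) (by positivity : (0:ℝ) ≤ b ^ m)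
    (by ring : 1/(m:ℝ) + (1 - 1/m) = 1)
  have e1 : ((a:ℝ) ^ m) ^ ((1:ℝ)/m) = a := by
    rw [← Real.rpow_natCast a m, ← Real.rpow_mul ha]
    rw [mul_one_div, div_self hm0, Real.rpow_one]
  have e2 : ((b:ℝ) ^ m) ^ ((1:ℝ) - 1/m) = b ^ (m - 1) := by
    rw [← Real.rpow_natCast b m, ← Real.rpow_mul hb, ← Real.rpow_natCast b (m-1)]
    congr 1
    have hc : ((m - 1 : ℕ) : ℝ) = (m:ℝ) - 1 := by rw [Nat.cast_sub hm]; simp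
    rw [hc]; field_simp <;> ring
  rw [e1, e2] at key
  have := mul_le_mul_of_nonneg_left key (le_of_lt (by positivity : (0:ℝ) < m))
  calc (m:ℝ) * (a * b ^ (m-1)) ≤ (m:ℝ) * (1/m * a^m + (1 - 1/m) * b^m) := this
    _ = a ^ m + ((m : ℝ) - 1) * b ^ m := by field_simp <;> ring

/-- Tangent-line inequality for even powers. -/
lemma tangent {q : ℕ} (hq : 1 ≤ q) (x t : ℝ) :
    x ^ (2*q) + (2*q : ℝ) * x ^ (2*q - 1) * t ≤ (x + t) ^ (2*q) := by
  set u := x + t with hu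
  have ht : t = u - x := by rw [hu]; ring
  have h2q : 1 ≤ 2*q := by omega
  have key : (2*q : ℝ) * x ^ (2*q - 1) * u ≤ u ^ (2*q) + ((2*q:ℝ) - 1) * x ^ (2*q) := by
    have h1 : (2*q : ℝ) * x ^ (2*q-1) * u ≤ (2*q:ℝ) * (|u| * |x| ^ (2*q-1)) := by
      have : x ^ (2*q-1) * u ≤ |u| * |x| ^ (2*q-1) := by
        calc x ^ (2*q-1) * u ≤ |x ^ (2*q-1) * u| := le_abs_self _
          _ = |u| * |x| ^ (2*q-1) := by rw [abs_mul, abs_pow]; ring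
      have h2 : (0:ℝ) ≤ 2*q := by positivity
      calc (2*q : ℝ) * x ^ (2*q-1) * u = (2*q:ℝ) * (x ^ (2*q-1) * u) := by ring
        _ ≤ (2*q:ℝ) * (|u| * |x| ^ (2*q-1)) := by
            exact mul_le_mul_of_nonneg_left this h2
    have h2 := young_nat (abs_nonneg u) (abs_nonneg x) h2q
    have e1 : |u| ^ (2*q) = u ^ (2*q) := Even.pow_abs (even_two_mul q) u
    have e2 : |x| ^ (2*q) = x ^ (2*q) := Even.pow_abs (even_two_mul q) x
    calc (2*q : ℝ) * x ^ (2*q-1) * u ≤ (2*q:ℝ) * (|u| * |x| ^ (2*q-1)) := h1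
      _ ≤ |u| ^ (2*q) + ((2*q:ℝ) - 1) * |x| ^ (2*q) := by exact_mod_cast h2
      _ = u ^ (2*q) + ((2*q:ℝ) - 1) * x ^ (2*q) := by rw [e1, e2]
  have : x ^ (2*q) + (2*q : ℝ) * x ^ (2*q-1) * t
      = x ^ (2*q) + (2*q : ℝ) * x ^ (2*q-1) * u - (2*q:ℝ) * x ^ (2*q-1) * x := by
    rw [ht]; ring
  rw [this]
  have hx : (2*q:ℝ) * x ^ (2*q-1) * x = (2*q:ℝ) * x ^ (2*q) := by
    have : x ^ (2*q-1) * x = x ^ (2*q) := by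
      rw [← pow_succ]; congr 1; omega
    rw [mul_assoc, this]
  rw [hx]
  linarith [key]


variable {Ω : Type*} [MeasurableSpace Ω] {μ : Measure Ω} [IsProbabilityMeasure μ]
  {q : ℕ} {ξ : ℕ → Ω → ℝ}

lemma integrable_abs_pow_sum (hq : 1 ≤ q) (hmeas : ∀ k, Measurable (ξ k))
    (h2q : ∀ k, Integrable (fun ω => (ξ k ω) ^ (2*q)) μ)
    (s : Finset ℕ) {j : ℕ} (hj : j ≤ 2*q) :
    Integrable (fun ω => |∑ k ∈ s, ξ k ω| ^ j) μ := by
  have hmZ : Measurable fun ω => |∑ k ∈ s, ξ k ω| ^ j :=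
    ((Finset.measurable_sum s fun k _ => hmeas k).abs.pow_const j)
  have hg : Integrable (fun ω => 1 + (s.card : ℝ) ^ (2*q-1) * ∑ k ∈ s, (ξ k ω)^(2*q)) μ :=
    (integrable_const 1).add (((integrable_finset_sum s fun k _ => h2q k)).const_mul _)
  refine hg.mono' hmZ.aestronglyMeasurable (ae_of_all _ fun ω => ?_)
  have h0 : (0:ℝ) ≤ |∑ k ∈ s, ξ k ω| ^ j := by positivity
  rw [Real.norm_eq_abs, abs_of_nonneg h0]
  have h1 : |∑ k ∈ s, ξ k ω| ^ j ≤ 1 + |∑ k ∈ s, ξ k ω| ^ (2*q) := by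
    rcases le_total (|∑ k ∈ s, ξ k ω|) 1 with h | h
    · have h2 : |∑ k ∈ s, ξ k ω| ^ j ≤ 1 := pow_le_one₀ (abs_nonneg _) h
      have h3 : (0:ℝ) ≤ |∑ k ∈ s, ξ k ω| ^ (2*q) := by positivity
      linarith
    · have h2 : |∑ k ∈ s, ξ k ω| ^ j ≤ |∑ k ∈ s, ξ k ω| ^ (2*q) :=
        pow_le_pow_right₀ h hj
      linarith
  have h2 : |∑ k ∈ s, ξ k ω| ^ (2*q) ≤ (∑ k ∈ s, |ξ k ω|) ^ (2*q) :=
    pow_le_pow_left₀ (abs_nonneg _) (Finset.abs_sum_le_sum_abs _ _) _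
  have h3 : (∑ k ∈ s, |ξ k ω|) ^ (2*q) ≤ (s.card : ℝ) ^ (2*q-1) * ∑ k ∈ s, |ξ k ω| ^ (2*q) := by
    have h4 := pow_sum_le_card_mul_sum_pow (s := s) (f := fun k => |ξ k ω|)
      (fun i _ => abs_nonneg _) (2*q-1)
    have h5 : 2*q - 1 + 1 = 2*q := by omega
    rwa [h5] at h4
  have h6 : ∑ k ∈ s, |ξ k ω| ^ (2*q) = ∑ k ∈ s, (ξ k ω) ^ (2*q) :=
    Finset.sum_congr rfl fun k _ => Even.pow_abs (even_two_mul q) _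
  have h7 : (0:ℝ) ≤ (s.card : ℝ) ^ (2*q-1) := by positivity
  rw [h6] at h3
  linarith

lemma integrable_pow_sum (hq : 1 ≤ q) (hmeas : ∀ k, Measurable (ξ k))
    (h2q : ∀ k, Integrable (fun ω => (ξ k ω) ^ (2*q)) μ)
    (s : Finset ℕ) {j : ℕ} (hj : j ≤ 2*q) :
    Integrable (fun ω => (∑ k ∈ s, ξ k ω) ^ j) μ := by
  have hmZ : Measurable fun ω => (∑ k ∈ s, ξ k ω) ^ j :=
    ((Finset.measurable_sum s fun k _ => hmeas k).pow_const j)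
  refine (integrable_abs_pow_sum hq hmeas h2q s hj).mono' hmZ.aestronglyMeasurable
    (ae_of_all _ fun ω => ?_)
  rw [Real.norm_eq_abs, ← abs_pow]

lemma lyapunov {X : Ω → ℝ} (hq : 1 ≤ q) (hX : Measurable X)
    (hint : Integrable (fun ω => |X ω| ^ (2*q)) μ) {j : ℕ} (hj : j ≤ 2*q) :
    ∫ ω, |X ω| ^ j ∂μ ≤ ((∫ ω, |X ω| ^ (2*q) ∂μ) ^ (((2*(q:ℝ)))⁻¹)) ^ j := by
  rcases Nat.eq_zero_or_pos j with rfl | hjpos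
  · simp
  have h0 : ((2*q : ℕ) : ℝ≥0∞) ≠ 0 := by
    simp; omega
  have htop : ((2*q : ℕ) : ℝ≥0∞) ≠ ∞ := ENNReal.natCast_ne_top _
  have hj0 : ((j : ℕ) : ℝ≥0∞) ≠ 0 := by simp; omega
  have hjtop : ((j : ℕ) : ℝ≥0∞) ≠ ∞ := ENNReal.natCast_ne_top _
  have hfeq : ∀ m : ℕ, (fun x => ‖X x‖ ^ (((m:ℕ) : ℝ≥0∞)).toReal) = fun ω => |X ω| ^ m := by
    intro m; funext ω
    rw [Real.norm_eq_abs, ENNReal.toReal_natCast, Real.rpow_natCast]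
  have hmem : MemLp X ((2*q : ℕ) : ℝ≥0∞) μ := by
    refine (memLp_norm_rpow_iff hX.aestronglyMeasurable h0 htop).mp ?_
    rw [ENNReal.div_self h0 htop, hfeq]
    exact (memLp_one_iff_integrable).mpr hint
  have hmemj : MemLp X ((j : ℕ) : ℝ≥0∞) μ :=
    hmem.mono_exponent (by exact_mod_cast hj)
  have hle : eLpNorm X ((j:ℕ) : ℝ≥0∞) μ ≤ eLpNorm X ((2*q : ℕ) : ℝ≥0∞) μ :=
    eLpNorm_le_eLpNorm_of_exponent_le (by exact_mod_cast hj) hX.aestronglyMeasurable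
  rw [MemLp.eLpNorm_eq_integral_rpow_norm hj0 hjtop hmemj,
    MemLp.eLpNorm_eq_integral_rpow_norm h0 htop hmem] at hle
  have hreal := (ENNReal.ofReal_le_ofReal_iff (by positivity)).mp hle
  rw [hfeq, hfeq] at hreal
  have hIj : (0:ℝ) ≤ ∫ ω, |X ω| ^ j ∂μ := integral_nonneg fun ω => by positivity
  have hI2 : (0:ℝ) ≤ ∫ ω, |X ω| ^ (2*q) ∂μ := integral_nonneg fun ω => by positivity
  have hjr : (((j:ℕ) : ℝ≥0∞)).toReal = (j : ℝ) := ENNReal.toReal_natCast j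
  have h2qr : (((2*q:ℕ) : ℝ≥0∞)).toReal = 2*(q:ℝ) := by
    rw [ENNReal.toReal_natCast]; push_cast; ring
  rw [hjr, h2qr] at hreal
  -- hreal : Ij ^ (j:ℝ)⁻¹ ≤ I2 ^ (2q:ℝ)⁻¹
  have key : ∫ ω, |X ω| ^ j ∂μ
      = ((∫ ω, |X ω| ^ j ∂μ) ^ ((j : ℝ))⁻¹) ^ j := by
    rw [← Real.rpow_natCast ((∫ ω, |X ω| ^ j ∂μ) ^ ((j : ℝ))⁻¹) j,
      ← Real.rpow_mul hIj]
    rw [inv_mul_cancel₀ (Nat.cast_ne_zero.mpr hjpos.ne' : (j:ℝ) ≠ 0), Real.rpow_one]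
  rw [key]
  exact pow_le_pow_left₀ (Real.rpow_nonneg hIj _) hreal j

lemma indep_sum_single (hmeas : ∀ k, Measurable (ξ k))
    (hindep : iIndepFun ξ μ) (n : ℕ) :
    IndepFun (fun ω => ∑ k ∈ range n, ξ k ω) (ξ n) μ := by
  have h := hindep.indepFun_finsetSum_of_notMem hmeas
    (Finset.notMem_range_self (n := n))
  have : (∑ k ∈ range n, ξ k) = fun ω => ∑ k ∈ range n, ξ k ω := by
    funext ω; simp [Finset.sum_apply]
  rwa [this] at h

lemma moment_rec (hq : 1 ≤ q) (hmeas : ∀ k, Measurable (ξ k))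
    (hindep : iIndepFun ξ μ)
    (h2q : ∀ k, Integrable (fun ω => (ξ k ω) ^ (2*q)) μ) (n : ℕ) :
    ∫ ω, (∑ k ∈ range (n+1), ξ k ω) ^ (2*q) ∂μ
      = ∑ j ∈ range (2*q+1), ((2*q).choose j : ℝ)
          * ((∫ ω, (∑ k ∈ range n, ξ k ω) ^ j ∂μ) * (∫ ω, (ξ n ω) ^ (2*q - j) ∂μ)) := by
  have hxik : ∀ j ≤ 2*q, Integrable (fun ω => (ξ n ω) ^ j) μ := by
    intro j hj
    have := integrable_pow_sum (μ := μ) hq hmeas h2q {n} hj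
    simpa using this
  have hSint : ∀ j ≤ 2*q, Integrable (fun ω => (∑ k ∈ range n, ξ k ω) ^ j) μ :=
    fun j hj => integrable_pow_sum hq hmeas h2q (range n) hj
  have hindep2 : ∀ i j : ℕ, IndepFun (fun ω => (∑ k ∈ range n, ξ k ω) ^ i)
      (fun ω => (ξ n ω) ^ j) μ :=
    fun i j => (indep_sum_single hmeas hindep n).comp
      (measurable_id.pow_const i) (measurable_id.pow_const j)
  have hterm : ∀ j ∈ range (2*q+1), Integrable
      (fun ω => (∑ k ∈ range n, ξ k ω) ^ j * (ξ n ω) ^ (2*q-j) * ((2*q).choose j : ℝ)) μ := by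
    intro j hj
    rw [Finset.mem_range] at hj
    have h1 : Integrable (fun ω => (∑ k ∈ range n, ξ k ω) ^ j * (ξ n ω) ^ (2*q-j)) μ := by
      have := (hindep2 j (2*q-j)).integrable_mul (hSint j (by omega)) (hxik (2*q-j) (by omega))
      exact this
    exact h1.mul_const _
  have hexp : ∀ ω, (∑ k ∈ range (n+1), ξ k ω) ^ (2*q)
      = ∑ j ∈ range (2*q+1), (∑ k ∈ range n, ξ k ω) ^ j * (ξ n ω) ^ (2*q-j)
          * ((2*q).choose j : ℝ) := by
    intro ω
    rw [Finset.sum_range_succ]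
    exact_mod_cast add_pow (∑ k ∈ range n, ξ k ω) (ξ n ω) (2*q)
  calc ∫ ω, (∑ k ∈ range (n+1), ξ k ω) ^ (2*q) ∂μ
      = ∫ ω, ∑ j ∈ range (2*q+1), (∑ k ∈ range n, ξ k ω) ^ j * (ξ n ω) ^ (2*q-j)
          * ((2*q).choose j : ℝ) ∂μ := by
        exact integral_congr_ae (ae_of_all _ hexp)
    _ = ∑ j ∈ range (2*q+1), ∫ ω, (∑ k ∈ range n, ξ k ω) ^ j * (ξ n ω) ^ (2*q-j)
          * ((2*q).choose j : ℝ) ∂μ := integral_finset_sum _ hterm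
    _ = ∑ j ∈ range (2*q+1), ((2*q).choose j : ℝ)
          * ((∫ ω, (∑ k ∈ range n, ξ k ω) ^ j ∂μ) * (∫ ω, (ξ n ω) ^ (2*q - j) ∂μ)) := by
        refine Finset.sum_congr rfl fun j hj => ?_
        rw [Finset.mem_range] at hj
        rw [integral_mul_const]
        have := (hindep2 j (2*q-j)).integral_mul_eq_mul_integral
          (hSint j (by omega)).aestronglyMeasurable (hxik (2*q-j) (by omega)).aestronglyMeasurable
        have heq : (∫ ω, (fun ω => (∑ k ∈ range n, ξ k ω) ^ j) ω
            * (fun ω => (ξ n ω) ^ (2*q-j)) ω ∂μ)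
            = (∫ ω, (∑ k ∈ range n, ξ k ω) ^ j ∂μ) * (∫ ω, (ξ n ω) ^ (2*q - j) ∂μ) := this
        simp only at heq
        rw [heq]; ring

set_option maxHeartbeats 1000000 in
lemma moment_bound (hq : 1 ≤ q) (hmeas : ∀ k, Measurable (ξ k))
    (hindep : iIndepFun ξ μ)
    (hcent : ∀ k, ∫ ω, ξ k ω ∂μ = 0)
    (h2q : ∀ k, Integrable (fun ω => (ξ k ω) ^ (2*q)) μ) (n : ℕ) :
    ∫ ω, (∑ k ∈ range n, ξ k ω) ^ (2*q) ∂μ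
      ≤ ((2:ℝ)^q + 2)^(2*q)
        * (∑ k ∈ range n, ((∫ ω, (ξ k ω)^(2*q) ∂μ) ^ ((2*(q:ℝ)))⁻¹) ^ 2) ^ q := by
  induction n with
  | zero =>
      simp only [Finset.range_zero, Finset.sum_empty]
      rw [zero_pow (by omega : 2*q ≠ 0), zero_pow (by omega : q ≠ 0), mul_zero]
      rw [integral_const]; simp
  | succ n ih =>
      -- notation
      set A := ∫ ω, (∑ k ∈ range n, ξ k ω) ^ (2*q) ∂μ with hAdef
      set bn := ∫ ω, (ξ n ω)^(2*q) ∂μ with hbndef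
      have hA0 : 0 ≤ A := integral_nonneg fun ω => Even.pow_nonneg (even_two_mul q) _
      have hbn0 : 0 ≤ bn := integral_nonneg fun ω => Even.pow_nonneg (even_two_mul q) _
      set x := A ^ ((2*(q:ℝ)))⁻¹ with hxdef
      set y := bn ^ ((2*(q:ℝ)))⁻¹ with hydef
      have hx0 : 0 ≤ x := Real.rpow_nonneg hA0 _
      have hy0 : 0 ≤ y := Real.rpow_nonneg hbn0 _
      set t := (2:ℝ)^q + 2 with htdef
      have ht3 : (3:ℝ) ≤ t := by
        have : (2:ℝ)^1 ≤ (2:ℝ)^q := pow_le_pow_right₀ (by norm_num) hq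
        simp only [htdef]; nlinarith
      have ht0 : (0:ℝ) < t := by linarith
      have ht1 : (1:ℝ) ≤ t := by linarith
      have htsq : (2:ℝ)^(2*q) ≤ t^2 := by
        have : (2:ℝ)^(2*q) = ((2:ℝ)^q)^2 := by rw [← pow_mul]; ring_nf
        rw [this]
        have h2t : (2:ℝ)^q ≤ t := by simp only [htdef]; nlinarith [pow_pos (by norm_num : (0:ℝ)<2) q]
        exact pow_le_pow_left₀ (by positivity) h2t 2
      set D := ∑ k ∈ range n, ((∫ ω, (ξ k ω)^(2*q) ∂μ) ^ ((2*(q:ℝ)))⁻¹) ^ 2 with hDdef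
      have hD0 : 0 ≤ D := Finset.sum_nonneg fun k _ => sq_nonneg _
      set cn := y^2 with hcndef
      have hcn0 : 0 ≤ cn := sq_nonneg _
      have hsum_succ : ∑ k ∈ range (n+1), ((∫ ω, (ξ k ω)^(2*q) ∂μ) ^ ((2*(q:ℝ)))⁻¹) ^ 2
          = D + cn := by rw [Finset.sum_range_succ]
      rw [hsum_succ]
      have h2q0 : ((2*q : ℕ) : ℝ) ≠ 0 := by positivity
      have hxpow : x ^ (2*q) = A := by
        rw [hxdef, ← Real.rpow_natCast (A ^ ((2*(q:ℝ)))⁻¹) (2*q), ← Real.rpow_mul hA0]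
        rw [show ((2*q : ℕ) : ℝ) = 2*(q:ℝ) by push_cast; ring]
        rw [inv_mul_cancel₀ (by positivity), Real.rpow_one]
      have hypow : y ^ (2*q) = bn := by
        rw [hydef, ← Real.rpow_natCast (bn ^ ((2*(q:ℝ)))⁻¹) (2*q), ← Real.rpow_mul hbn0]
        rw [show ((2*q : ℕ) : ℝ) = 2*(q:ℝ) by push_cast; ring]
        rw [inv_mul_cancel₀ (by positivity), Real.rpow_one]
      -- Lyapunov bounds
      have hSbound : ∀ j ≤ 2*q, |∫ ω, (∑ k ∈ range n, ξ k ω) ^ j ∂μ| ≤ x ^ j := by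
        intro j hj
        have h1 : |∫ ω, (∑ k ∈ range n, ξ k ω) ^ j ∂μ|
            ≤ ∫ ω, |∑ k ∈ range n, ξ k ω| ^ j ∂μ := by
          calc |∫ ω, (∑ k ∈ range n, ξ k ω) ^ j ∂μ|
              ≤ ∫ ω, |(∑ k ∈ range n, ξ k ω) ^ j| ∂μ := by
                have := norm_integral_le_integral_norm (μ := μ)
                  (f := fun ω => (∑ k ∈ range n, ξ k ω) ^ j)
                simpa [Real.norm_eq_abs] using this
            _ = ∫ ω, |∑ k ∈ range n, ξ k ω| ^ j ∂μ := by
                congr 1; funext ω; rw [abs_pow]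
        have h2 := lyapunov (μ := μ) hq (Finset.measurable_sum _ fun k _ => hmeas k)
          (by
            have := integrable_abs_pow_sum (μ := μ) hq hmeas h2q (range n) (le_refl (2*q))
            exact this) hj
        have h3 : ∫ ω, |∑ k ∈ range n, ξ k ω| ^ (2*q) ∂μ = A := by
          rw [hAdef]; congr 1; funext ω; rw [Even.pow_abs (even_two_mul q)]
        rw [h3] at h2
        exact h1.trans h2
      have hXbound : ∀ j ≤ 2*q, |∫ ω, (ξ n ω) ^ j ∂μ| ≤ y ^ j := by
        intro j hj
        have h1 : |∫ ω, (ξ n ω) ^ j ∂μ| ≤ ∫ ω, |ξ n ω| ^ j ∂μ := by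
          calc |∫ ω, (ξ n ω) ^ j ∂μ| ≤ ∫ ω, |(ξ n ω) ^ j| ∂μ := by
                have := norm_integral_le_integral_norm (μ := μ) (f := fun ω => (ξ n ω) ^ j)
                simpa [Real.norm_eq_abs] using this
            _ = ∫ ω, |ξ n ω| ^ j ∂μ := by congr 1; funext ω; rw [abs_pow]
        have h2 := lyapunov (μ := μ) hq (hmeas n)
          (by
            have : Integrable (fun ω => (ξ n ω)^(2*q)) μ := h2q n
            refine this.mono' ((hmeas n).abs.pow_const _).aestronglyMeasurable
              (ae_of_all _ fun ω => ?_)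
            rw [Real.norm_eq_abs, abs_of_nonneg (by positivity), Even.pow_abs (even_two_mul q)]
            ) hj
        have h3 : ∫ ω, |ξ n ω| ^ (2*q) ∂μ = bn := by
          rw [hbndef]; congr 1; funext ω; rw [Even.pow_abs (even_two_mul q)]
        rw [h3] at h2
        exact h1.trans h2
      -- expansion and bound by M
      have hrec := moment_rec (μ := μ) hq hmeas hindep h2q n
      have hzero : ((2*q).choose (2*q-1) : ℝ)
          * ((∫ ω, (∑ k ∈ range n, ξ k ω) ^ (2*q-1) ∂μ)
             * (∫ ω, (ξ n ω) ^ (2*q - (2*q-1)) ∂μ)) = 0 := by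
        have h1 : 2*q - (2*q-1) = 1 := by omega
        rw [h1]
        simp only [pow_one]
        rw [hcent n]
        ring
      have hmem : (2*q-1) ∈ range (2*q+1) := by
        rw [Finset.mem_range]; omega
      have hrec2 : ∫ ω, (∑ k ∈ range (n+1), ξ k ω) ^ (2*q) ∂μ
          = ∑ j ∈ (range (2*q+1)).erase (2*q-1), ((2*q).choose j : ℝ)
          * ((∫ ω, (∑ k ∈ range n, ξ k ω) ^ j ∂μ) * (∫ ω, (ξ n ω) ^ (2*q - j) ∂μ)) := by
        rw [hrec, ← Finset.add_sum_erase _ _ hmem, hzero, zero_add]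
      have hM : ∫ ω, (∑ k ∈ range (n+1), ξ k ω) ^ (2*q) ∂μ
          ≤ ∑ j ∈ (range (2*q+1)).erase (2*q-1), ((2*q).choose j : ℝ) * (x ^ j * y ^ (2*q-j)) := by
        rw [hrec2]
        refine Finset.sum_le_sum fun j hj => ?_
        have hjr : j ≤ 2*q := by
          have := Finset.mem_of_mem_erase hj
          rw [Finset.mem_range] at this; omega
        have h1 := hSbound j hjr
        have h2 := hXbound (2*q-j) (by omega)
        have habs : |(∫ ω, (∑ k ∈ range n, ξ k ω) ^ j ∂μ) * (∫ ω, (ξ n ω) ^ (2*q - j) ∂μ)|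
            ≤ x ^ j * y ^ (2*q-j) := by
          rw [abs_mul]
          exact mul_le_mul h1 h2 (abs_nonneg _) (by positivity)
        have hc0 : (0:ℝ) ≤ ((2*q).choose j : ℝ) := by positivity
        calc ((2*q).choose j : ℝ) * ((∫ ω, (∑ k ∈ range n, ξ k ω) ^ j ∂μ)
              * (∫ ω, (ξ n ω) ^ (2*q - j) ∂μ))
            ≤ ((2*q).choose j : ℝ) * |(∫ ω, (∑ k ∈ range n, ξ k ω) ^ j ∂μ)
              * (∫ ω, (ξ n ω) ^ (2*q - j) ∂μ)| :=
              mul_le_mul_of_nonneg_left (le_abs_self _) hc0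
          _ ≤ ((2*q).choose j : ℝ) * (x ^ j * y ^ (2*q-j)) :=
              mul_le_mul_of_nonneg_left habs hc0
      -- now bound M in two cases
      have hxD : x ≤ t * Real.sqrt D := by
        have hrhs0 : 0 ≤ t * Real.sqrt D := by positivity
        have hpow : (t * Real.sqrt D) ^ (2*q) = t^(2*q) * D^q := by
          rw [mul_pow]
          congr 1
          rw [show 2*q = q*2 by ring, pow_mul' , Real.sq_sqrt hD0]
        refine le_of_pow_le_pow_left₀ (n := 2*q) (by omega) hrhs0 ?_
        rw [hxpow, hpow]
        exact ih
      rcases le_total cn D with hcase | hcase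
      · -- cn ≤ D
        have hyD : y ≤ Real.sqrt D := by
          have : y^2 ≤ (Real.sqrt D)^2 := by rw [Real.sq_sqrt hD0]; exact hcase
          exact le_of_pow_le_pow_left₀ (n := 2) (by norm_num) (Real.sqrt_nonneg _) this
        have hmem2 : 2*q ∈ (range (2*q+1)).erase (2*q-1) := by
          rw [Finset.mem_erase, Finset.mem_range]
          constructor
          · omega
          · omega
        have hsplit : ∑ j ∈ (range (2*q+1)).erase (2*q-1), ((2*q).choose j : ℝ)
              * (x ^ j * y ^ (2*q-j))
            = ((2*q).choose (2*q) : ℝ) * (x ^ (2*q) * y ^ (2*q-2*q))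
              + ∑ j ∈ ((range (2*q+1)).erase (2*q-1)).erase (2*q), ((2*q).choose j : ℝ)
              * (x ^ j * y ^ (2*q-j)) := by
          exact (Finset.add_sum_erase _ _ hmem2).symm
        have hfirst : ((2*q).choose (2*q) : ℝ) * (x ^ (2*q) * y ^ (2*q-2*q))
            ≤ t^(2*q) * D^q := by
          rw [Nat.choose_self, Nat.sub_self, pow_zero, mul_one, Nat.cast_one, one_mul, hxpow]
          exact ih
        have hrest : ∑ j ∈ ((range (2*q+1)).erase (2*q-1)).erase (2*q), ((2*q).choose j : ℝ)
              * (x ^ j * y ^ (2*q-j))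
            ≤ t^(2*q) * (D^(q-1) * cn) := by
          have hterm : ∀ j ∈ ((range (2*q+1)).erase (2*q-1)).erase (2*q),
              ((2*q).choose j : ℝ) * (x ^ j * y ^ (2*q-j))
              ≤ ((2*q).choose j : ℝ) * (t^(2*q-2) * (D^(q-1) * cn)) := by
            intro j hj
            have hj2 : j ≤ 2*q - 2 := by
              have h1 := Finset.mem_of_mem_erase hj
              have h2 := Finset.mem_of_mem_erase h1
              rw [Finset.mem_range] at h2
              have h3 : j ≠ 2*q := Finset.ne_of_mem_erase hj
              have h4 : j ≠ 2*q-1 := Finset.ne_of_mem_erase h1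
              omega
            have hc0 : (0:ℝ) ≤ ((2*q).choose j : ℝ) := by positivity
            refine mul_le_mul_of_nonneg_left ?_ hc0
            have e1 : x ^ j ≤ (t * Real.sqrt D) ^ j := pow_le_pow_left₀ hx0 hxD j
            have e2 : y ^ (2*q-j) = y ^ (2*q-j-2) * cn := by
              rw [hcndef, ← pow_add]
              congr 1
              omega
            have e3 : y ^ (2*q-j-2) ≤ (Real.sqrt D) ^ (2*q-j-2) :=
              pow_le_pow_left₀ hy0 hyD _
            have e4 : (t * Real.sqrt D) ^ j * ((Real.sqrt D) ^ (2*q-j-2) * cn)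
                = t^j * ((Real.sqrt D)^(2*q-2) * cn) := by
              rw [mul_pow]
              have hmerge : (Real.sqrt D)^j * (Real.sqrt D)^(2*q-j-2) = (Real.sqrt D)^(2*q-2) := by
                rw [← pow_add]; congr 1; omega
              calc t^j * (Real.sqrt D)^j * ((Real.sqrt D)^(2*q-j-2) * cn)
                  = t^j * (((Real.sqrt D)^j * (Real.sqrt D)^(2*q-j-2)) * cn) := by ring
                _ = t^j * ((Real.sqrt D)^(2*q-2) * cn) := by rw [hmerge]
            have e5 : (Real.sqrt D)^(2*q-2) = D^(q-1) := by
              rw [show 2*q-2 = (q-1)*2 by omega, pow_mul', Real.sq_sqrt hD0]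
            have e6 : t^j ≤ t^(2*q-2) := pow_le_pow_right₀ ht1 (by omega)
            calc x ^ j * y ^ (2*q-j) ≤ (t * Real.sqrt D) ^ j * ((Real.sqrt D) ^ (2*q-j-2) * cn) := by
                  rw [e2]
                  refine mul_le_mul e1 ?_ (by positivity) (by positivity)
                  exact mul_le_mul_of_nonneg_right e3 hcn0
              _ = t^j * ((Real.sqrt D)^(2*q-2) * cn) := e4
              _ = t^j * (D^(q-1) * cn) := by rw [e5]
              _ ≤ t^(2*q-2) * (D^(q-1) * cn) :=
                  mul_le_mul_of_nonneg_right e6 (by positivity)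
          calc ∑ j ∈ ((range (2*q+1)).erase (2*q-1)).erase (2*q), ((2*q).choose j : ℝ)
                * (x ^ j * y ^ (2*q-j))
              ≤ ∑ j ∈ ((range (2*q+1)).erase (2*q-1)).erase (2*q), ((2*q).choose j : ℝ)
                * (t^(2*q-2) * (D^(q-1) * cn)) := Finset.sum_le_sum hterm
            _ = (∑ j ∈ ((range (2*q+1)).erase (2*q-1)).erase (2*q), ((2*q).choose j : ℝ))
                * (t^(2*q-2) * (D^(q-1) * cn)) := by rw [← Finset.sum_mul]
            _ ≤ (2:ℝ)^(2*q) * (t^(2*q-2) * (D^(q-1) * cn)) := by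
                refine mul_le_mul_of_nonneg_right ?_ (by positivity)
                have h1 : ∑ j ∈ ((range (2*q+1)).erase (2*q-1)).erase (2*q),
                    ((2*q).choose j : ℝ) ≤ ∑ j ∈ range (2*q+1), ((2*q).choose j : ℝ) := by
                  refine Finset.sum_le_sum_of_subset_of_nonneg ?_ (fun j _ _ => by positivity)
                  intro j hj
                  exact Finset.mem_of_mem_erase (Finset.mem_of_mem_erase hj)
                have h2 : ∑ j ∈ range (2*q+1), ((2*q).choose j : ℝ) = (2:ℝ)^(2*q) := by
                  rw [← Nat.cast_sum]
                  rw [Nat.sum_range_choose]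
                  push_cast; ring
                rw [← h2]; exact h1
            _ ≤ t^2 * (t^(2*q-2) * (D^(q-1) * cn)) :=
                mul_le_mul_of_nonneg_right htsq (by positivity)
            _ = t^(2*q) * (D^(q-1) * cn) := by
                rw [← mul_assoc, ← pow_add]
                congr 2
                omega
        have hbinom : D^q + D^(q-1) * cn ≤ (D + cn)^q := by
          have h1 : (D + cn)^q = (D+cn) * (D+cn)^(q-1) := by
            rw [← pow_succ']
            congr 1
            omega
          have h2 : D^(q-1) ≤ (D+cn)^(q-1) := pow_le_pow_left₀ hD0 (by linarith) _
          have h3 : D^q = D * D^(q-1) := by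
            rw [← pow_succ']
            congr 1
            omega
          calc D^q + D^(q-1)*cn = D * D^(q-1) + cn * D^(q-1) := by rw [h3]; ring
            _ ≤ D * (D+cn)^(q-1) + cn * (D+cn)^(q-1) := by
                refine add_le_add ?_ ?_
                · exact mul_le_mul_of_nonneg_left h2 hD0
                · exact mul_le_mul_of_nonneg_left h2 hcn0
            _ = (D+cn) * (D+cn)^(q-1) := by ring
            _ = (D + cn)^q := h1.symm
        calc ∫ ω, (∑ k ∈ range (n+1), ξ k ω) ^ (2*q) ∂μ
            ≤ ∑ j ∈ (range (2*q+1)).erase (2*q-1), ((2*q).choose j : ℝ)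
              * (x ^ j * y ^ (2*q-j)) := hM
          _ = ((2*q).choose (2*q) : ℝ) * (x ^ (2*q) * y ^ (2*q-2*q))
              + ∑ j ∈ ((range (2*q+1)).erase (2*q-1)).erase (2*q), ((2*q).choose j : ℝ)
              * (x ^ j * y ^ (2*q-j)) := hsplit
          _ ≤ t^(2*q) * D^q + t^(2*q) * (D^(q-1) * cn) := add_le_add hfirst hrest
          _ = t^(2*q) * (D^q + D^(q-1) * cn) := by ring
          _ ≤ t^(2*q) * (D + cn)^q := mul_le_mul_of_nonneg_left hbinom (by positivity)
      · -- D ≤ cn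
        have hycn : y ≤ Real.sqrt cn := by
          have : y^2 ≤ (Real.sqrt cn)^2 := by rw [Real.sq_sqrt hcn0]
          exact le_of_pow_le_pow_left₀ (n := 2) (by norm_num) (Real.sqrt_nonneg _) this
        have hadd : ∑ j ∈ (range (2*q+1)).erase (2*q-1), ((2*q).choose j : ℝ)
              * (x ^ j * y ^ (2*q-j))
            ≤ ∑ j ∈ range (2*q+1), ((2*q).choose j : ℝ) * (x ^ j * y ^ (2*q-j)) := by
          refine Finset.sum_le_sum_of_subset_of_nonneg (Finset.erase_subset _ _)
            (fun j _ _ => by positivity)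
        have haddpow : ∑ j ∈ range (2*q+1), ((2*q).choose j : ℝ) * (x ^ j * y ^ (2*q-j))
            = (x + y)^(2*q) := by
          rw [add_pow]
          refine Finset.sum_congr rfl fun j hj => ?_
          ring
        have hxy : x + y ≤ t * Real.sqrt (D + cn) := by
          have h1 : x ≤ t * Real.sqrt D := hxD
          have hsd : Real.sqrt D ≤ Real.sqrt cn := Real.sqrt_le_sqrt hcase
          have h2 : (x+y)^2 ≤ (t * Real.sqrt (D+cn))^2 := by
            have e1 : (t * Real.sqrt (D+cn))^2 = t^2 * (D + cn) := by
              rw [mul_pow, Real.sq_sqrt (by linarith)]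
            rw [e1]
            have e2 : (x+y)^2 ≤ (t*Real.sqrt D + Real.sqrt cn)^2 := by
              have := add_le_add h1 hycn
              exact pow_le_pow_left₀ (by positivity) this 2
            have e3 : (t*Real.sqrt D + Real.sqrt cn)^2
                = t^2 * D + 2*t*(Real.sqrt D * Real.sqrt cn) + cn := by
              have hD' : Real.sqrt D ^ 2 = D := Real.sq_sqrt hD0
              have hc' : Real.sqrt cn ^ 2 = cn := Real.sq_sqrt hcn0
              linear_combination (t^2) * hD' + hc'
            have e4 : Real.sqrt D * Real.sqrt cn ≤ cn := by
              calc Real.sqrt D * Real.sqrt cn ≤ Real.sqrt cn * Real.sqrt cn :=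
                    mul_le_mul_of_nonneg_right hsd (Real.sqrt_nonneg _)
                _ = cn := Real.mul_self_sqrt hcn0
            have e5 : 2*t + 1 ≤ t^2 := by
              have h9 : 3*t ≤ t*t := mul_le_mul_of_nonneg_right ht3 (le_of_lt ht0)
              have h10 : t^2 = t*t := sq t
              linarith
            have e6 : 2*t*(Real.sqrt D * Real.sqrt cn) ≤ 2*t*cn :=
              mul_le_mul_of_nonneg_left e4 (by positivity)
            have e7 : (2*t+1)*cn ≤ t^2*cn := mul_le_mul_of_nonneg_right e5 hcn0
            have e8 : (2*t+1)*cn = 2*t*cn + cn := by ring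
            have e9 : t^2 * D + t^2 * cn = t^2*(D+cn) := by ring
            linarith
          refine le_of_pow_le_pow_left₀ (n := 2) (by norm_num) (by positivity) h2
        have hfinal : (x+y)^(2*q) ≤ t^(2*q) * (D+cn)^q := by
          have h1 : (x+y)^(2*q) ≤ (t * Real.sqrt (D+cn))^(2*q) :=
            pow_le_pow_left₀ (by positivity) hxy _
          have h2 : (t * Real.sqrt (D+cn))^(2*q) = t^(2*q) * (D+cn)^q := by
            rw [mul_pow]
            congr 1
            rw [show 2*q = q*2 by ring, pow_mul', Real.sq_sqrt (by linarith)]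
          rw [← h2]; exact h1
        calc ∫ ω, (∑ k ∈ range (n+1), ξ k ω) ^ (2*q) ∂μ
            ≤ ∑ j ∈ (range (2*q+1)).erase (2*q-1), ((2*q).choose j : ℝ)
              * (x ^ j * y ^ (2*q-j)) := hM
          _ ≤ ∑ j ∈ range (2*q+1), ((2*q).choose j : ℝ) * (x ^ j * y ^ (2*q-j)) := hadd
          _ = (x + y)^(2*q) := haddpow
          _ ≤ t^(2*q) * (D+cn)^q := hfinal

lemma moment_bound' (hq : 1 ≤ q) (hmeas : ∀ k, Measurable (ξ k))
    (hindep : iIndepFun ξ μ)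
    (hcent : ∀ k, ∫ ω, ξ k ω ∂μ = 0)
    (h2q : ∀ k, Integrable (fun ω => (ξ k ω) ^ (2*q)) μ) (n : ℕ) :
    ∫ ω, (∑ k ∈ range n, ξ k ω) ^ (2*q) ∂μ
      ≤ ((2:ℝ)^q + 2)^(2*q) * ((n:ℝ)^(q-1) * ∑ k ∈ range n, ∫ ω, (ξ k ω)^(2*q) ∂μ) := by
  have h1 := moment_bound (μ := μ) hq hmeas hindep hcent h2q n
  have hden : ∀ k, (0:ℝ) ≤ ∫ ω, (ξ k ω)^(2*q) ∂μ :=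
    fun k => integral_nonneg fun ω => Even.pow_nonneg (even_two_mul q) _
  have h2 : (∑ k ∈ range n, ((∫ ω, (ξ k ω)^(2*q) ∂μ) ^ ((2*(q:ℝ)))⁻¹) ^ 2) ^ q
      ≤ (n:ℝ)^(q-1) * ∑ k ∈ range n, (((∫ ω, (ξ k ω)^(2*q) ∂μ) ^ ((2*(q:ℝ)))⁻¹) ^ 2) ^ q := by
    have h3 := pow_sum_le_card_mul_sum_pow (s := range n)
      (f := fun k => ((∫ ω, (ξ k ω)^(2*q) ∂μ) ^ ((2*(q:ℝ)))⁻¹) ^ 2)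
      (fun k _ => sq_nonneg _) (q-1)
    rw [show q - 1 + 1 = q by omega] at h3
    simpa using h3
  have h4 : ∀ k, (((∫ ω, (ξ k ω)^(2*q) ∂μ) ^ ((2*(q:ℝ)))⁻¹) ^ 2) ^ q
      = ∫ ω, (ξ k ω)^(2*q) ∂μ := by
    intro k
    rw [← pow_mul, ← Real.rpow_natCast ((∫ ω, (ξ k ω)^(2*q) ∂μ) ^ ((2*(q:ℝ)))⁻¹) (2*q),
      ← Real.rpow_mul (hden k), show ((2*q : ℕ) : ℝ) = 2*(q:ℝ) by push_cast; ring,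
      inv_mul_cancel₀ (by positivity), Real.rpow_one]
  have h5 : (∑ k ∈ range n, ((∫ ω, (ξ k ω)^(2*q) ∂μ) ^ ((2*(q:ℝ)))⁻¹) ^ 2) ^ q
      ≤ (n:ℝ)^(q-1) * ∑ k ∈ range n, ∫ ω, (ξ k ω)^(2*q) ∂μ := by
    calc (∑ k ∈ range n, ((∫ ω, (ξ k ω)^(2*q) ∂μ) ^ ((2*(q:ℝ)))⁻¹) ^ 2) ^ q
        ≤ (n:ℝ)^(q-1) * ∑ k ∈ range n, (((∫ ω, (ξ k ω)^(2*q) ∂μ) ^ ((2*(q:ℝ)))⁻¹) ^ 2) ^ q := h2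
      _ = (n:ℝ)^(q-1) * ∑ k ∈ range n, ∫ ω, (ξ k ω)^(2*q) ∂μ := by
          congr 1
          exact Finset.sum_congr rfl fun k _ => h4 k
  calc ∫ ω, (∑ k ∈ range n, ξ k ω) ^ (2*q) ∂μ
      ≤ ((2:ℝ)^q + 2)^(2*q)
        * (∑ k ∈ range n, ((∫ ω, (ξ k ω)^(2*q) ∂μ) ^ ((2*(q:ℝ)))⁻¹) ^ 2) ^ q := h1
    _ ≤ ((2:ℝ)^q + 2)^(2*q) * ((n:ℝ)^(q-1) * ∑ k ∈ range n, ∫ ω, (ξ k ω)^(2*q) ∂μ) :=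
        mul_le_mul_of_nonneg_left h5 (by positivity)

lemma meaA (hmeas : ∀ k, Measurable (ξ k)) (lam : ℝ) (j : ℕ) :
    MeasurableSet {ω | lam ≤ |∑ i ∈ range j, ξ i ω| ∧ ∀ i < j, |∑ k ∈ range i, ξ k ω| < lam} := by
  have hSm : ∀ i : ℕ, Measurable fun ω => |∑ k ∈ range i, ξ k ω| :=
    fun i => (Finset.measurable_sum _ fun k _ => hmeas k).abs
  have heq : {ω | lam ≤ |∑ i ∈ range j, ξ i ω| ∧ ∀ i < j, |∑ k ∈ range i, ξ k ω| < lam}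
      = {ω | lam ≤ |∑ i ∈ range j, ξ i ω|}
        ∩ ⋂ (i : ℕ), ⋂ (_ : i < j), {ω | |∑ k ∈ range i, ξ k ω| < lam} := by
    ext ω
    simp only [Set.mem_setOf_eq, Set.mem_inter_iff, Set.mem_iInter]
  rw [heq]
  exact (measurableSet_le measurable_const (hSm j)).inter
    (MeasurableSet.iInter fun i => MeasurableSet.iInter fun _ =>
      measurableSet_lt (hSm i) measurable_const)

set_option maxHeartbeats 1000000 in
lemma key_step (hq : 1 ≤ q) (hmeas : ∀ k, Measurable (ξ k))
    (hindep : iIndepFun ξ μ)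
    (hint : ∀ k, Integrable (ξ k) μ)
    (hcent : ∀ k, ∫ ω, ξ k ω ∂μ = 0)
    (h2q : ∀ k, Integrable (fun ω => (ξ k ω) ^ (2*q)) μ)
    (lam : ℝ) {j n : ℕ} (hjn : j ≤ n) :
    ∫ ω in {ω | lam ≤ |∑ i ∈ range j, ξ i ω| ∧ ∀ i < j, |∑ k ∈ range i, ξ k ω| < lam},
        (∑ i ∈ range j, ξ i ω) ^ (2*q) ∂μ
      ≤ ∫ ω in {ω | lam ≤ |∑ i ∈ range j, ξ i ω| ∧ ∀ i < j, |∑ k ∈ range i, ξ k ω| < lam},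
        (∑ i ∈ range n, ξ i ω) ^ (2*q) ∂μ := by
  classical
  set Aset := {ω | lam ≤ |∑ i ∈ range j, ξ i ω| ∧ ∀ i < j, |∑ k ∈ range i, ξ k ω| < lam}
    with hAdef
  have hAm : MeasurableSet Aset := meaA hmeas lam j
  set T := fun ω => ∑ i ∈ Ico j n, ξ i ω with hTdef
  have hST : ∀ ω, ∑ i ∈ range n, ξ i ω = (∑ i ∈ range j, ξ i ω) + T ω := by
    intro ω
    rw [hTdef]
    simp only [Finset.range_eq_Ico]
    rw [Finset.sum_Ico_consecutive _ (Nat.zero_le j) hjn]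
  -- independence setup
  have hdisjoint : Disjoint (range j) (Ico j n) := by
    rw [Finset.range_eq_Ico]
    exact Finset.Ico_disjoint_Ico_consecutive 0 j n
  have hFG := hindep.indepFun_finset (range j) (Ico j n) hdisjoint hmeas
  -- σ i reconstructs the partial sums from the restricted vector
  set σ : ℕ → ((i : (range j : Finset ℕ)) → ℝ) → ℝ :=
    fun i v => ∑ k ∈ range i, if h : k ∈ range j then v ⟨k, h⟩ else 0 with hσdef
  have hσmeas : ∀ i, Measurable (σ i) := by
    intro i
    apply Finset.measurable_sum
    intro k _
    by_cases h : k ∈ range j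
    · simp only [dif_pos h]
      exact measurable_pi_apply _
    · simp only [dif_neg h]
      exact measurable_const
  have hσS : ∀ i ≤ j, ∀ ω, σ i (fun k : (range j : Finset ℕ) => ξ k ω)
      = ∑ k ∈ range i, ξ k ω := by
    intro i hij ω
    refine Finset.sum_congr rfl fun k hk => ?_
    rw [Finset.mem_range] at hk
    rw [dif_pos (Finset.mem_range.mpr (lt_of_lt_of_le hk hij))]
  set ψ : ((i : (Ico j n : Finset ℕ)) → ℝ) → ℝ :=
    fun v => ∑ i ∈ Ico j n, if h : i ∈ Ico j n then v ⟨i, h⟩ else 0 with hψdef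
  have hψmeas : Measurable ψ := by
    apply Finset.measurable_sum
    intro k _
    by_cases h : k ∈ Ico j n
    · simp only [dif_pos h]
      exact measurable_pi_apply _
    · simp only [dif_neg h]
      exact measurable_const
  have hψT : ∀ ω, ψ (fun k : (Ico j n : Finset ℕ) => ξ k ω) = T ω := by
    intro ω
    refine Finset.sum_congr rfl fun k hk => ?_
    rw [dif_pos hk]
  set Bset : Set ((i : (range j : Finset ℕ)) → ℝ) :=
    {v | lam ≤ |σ j v| ∧ ∀ i < j, |σ i v| < lam} with hBdef
  have hBm : MeasurableSet Bset := by
    have heq : Bset = {v | lam ≤ |σ j v|}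
        ∩ ⋂ (i : ℕ), ⋂ (_ : i < j), {v | |σ i v| < lam} := by
      ext v
      simp only [hBdef, Set.mem_setOf_eq, Set.mem_inter_iff, Set.mem_iInter]
    rw [heq]
    exact (measurableSet_le measurable_const (hσmeas j).abs).inter
      (MeasurableSet.iInter fun i => MeasurableSet.iInter fun _ =>
        measurableSet_lt (hσmeas i).abs measurable_const)
  set φ : ((i : (range j : Finset ℕ)) → ℝ) → ℝ :=
    Bset.indicator (fun v => (σ j v) ^ (2*q-1)) with hφdef
  have hφmeas : Measurable φ := ((hσmeas j).pow_const _).indicator hBm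
  have hFpre : ∀ ω, ((fun k : (range j : Finset ℕ) => ξ k ω) ∈ Bset) ↔ ω ∈ Aset := by
    intro ω
    simp only [hBdef, hAdef, Set.mem_setOf_eq]
    rw [hσS j (le_refl j) ω]
    constructor
    · rintro ⟨h1, h2⟩
      exact ⟨h1, fun i hi => by
        have := h2 i hi
        rwa [hσS i (le_of_lt hi) ω] at this⟩
    · rintro ⟨h1, h2⟩
      exact ⟨h1, fun i hi => by
        rw [hσS i (le_of_lt hi) ω]
        exact h2 i hi⟩
  have hφF : ∀ ω, φ (fun k : (range j : Finset ℕ) => ξ k ω)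
      = Aset.indicator (fun ω => (∑ i ∈ range j, ξ i ω) ^ (2*q-1)) ω := by
    intro ω
    by_cases hω : ω ∈ Aset
    · rw [Set.indicator_of_mem hω, hφdef,
        Set.indicator_of_mem ((hFpre ω).mpr hω), hσS j (le_refl j) ω]
    · rw [Set.indicator_of_notMem hω, hφdef,
        Set.indicator_of_notMem (fun hc => hω ((hFpre ω).mp hc))]
  -- independence of the indicator-weighted past and the future sum
  have hWT : IndepFun (fun ω => φ (fun k : (range j : Finset ℕ) => ξ k ω))
      (fun ω => ψ (fun k : (Ico j n : Finset ℕ) => ξ k ω)) μ :=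
    hFG.comp hφmeas hψmeas
  have hWT2 : IndepFun
      (Aset.indicator (fun ω => (∑ i ∈ range j, ξ i ω) ^ (2*q-1))) T μ := by
    have e1 : (fun ω => φ (fun k : (range j : Finset ℕ) => ξ k ω))
        = Aset.indicator (fun ω => (∑ i ∈ range j, ξ i ω) ^ (2*q-1)) := funext hφF
    have e2 : (fun ω => ψ (fun k : (Ico j n : Finset ℕ) => ξ k ω)) = T := funext hψT
    rwa [e1, e2] at hWT
  -- integrability facts
  have hTint : Integrable T μ := integrable_finset_sum _ fun i _ => hint i
  have hTzero : ∫ ω, T ω ∂μ = 0 := by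
    rw [hTdef]
    rw [integral_finset_sum _ fun i _ => hint i]
    exact Finset.sum_eq_zero fun i _ => hcent i
  have hSjpow : Integrable (fun ω => (∑ i ∈ range j, ξ i ω) ^ (2*q-1)) μ :=
    integrable_pow_sum hq hmeas h2q (range j) (by omega)
  have hSjpow2 : Integrable (fun ω => (∑ i ∈ range j, ξ i ω) ^ (2*q)) μ :=
    integrable_pow_sum hq hmeas h2q (range j) (le_refl _)
  have hSnpow2 : Integrable (fun ω => (∑ i ∈ range n, ξ i ω) ^ (2*q)) μ :=
    integrable_pow_sum hq hmeas h2q (range n) (le_refl _)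
  have hWint : Integrable (Aset.indicator (fun ω => (∑ i ∈ range j, ξ i ω) ^ (2*q-1))) μ :=
    hSjpow.indicator hAm
  have hWTint : Integrable
      ((Aset.indicator (fun ω => (∑ i ∈ range j, ξ i ω) ^ (2*q-1))) * T) μ :=
    hWT2.integrable_mul hWint hTint
  have hfact : ∫ ω, (Aset.indicator (fun ω => (∑ i ∈ range j, ξ i ω) ^ (2*q-1))) ω * T ω ∂μ
      = 0 := by
    have := hWT2.integral_mul_eq_mul_integral hWint.aestronglyMeasurable hTint.aestronglyMeasurable
    have e : ∫ ω, ((Aset.indicator (fun ω => (∑ i ∈ range j, ξ i ω) ^ (2*q-1))) * T) ω ∂μ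
        = ∫ ω, (Aset.indicator (fun ω => (∑ i ∈ range j, ξ i ω) ^ (2*q-1))) ω * T ω ∂μ := rfl
    rw [← e, this, hTzero, mul_zero]
  -- rewrite as a set integral
  have hsetT : ∫ ω in Aset, (∑ i ∈ range j, ξ i ω) ^ (2*q-1) * T ω ∂μ = 0 := by
    rw [← integral_indicator hAm]
    rw [← hfact]
    congr 1
    funext ω
    by_cases hω : ω ∈ Aset
    · rw [Set.indicator_of_mem hω, Set.indicator_of_mem hω]
    · rw [Set.indicator_of_notMem hω, Set.indicator_of_notMem hω, zero_mul]
  -- integrand inequality and conclusion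
  have hSjTint : Integrable (fun ω => (∑ i ∈ range j, ξ i ω) ^ (2*q-1) * T ω) μ := by
    have hind : IndepFun (fun ω => (∑ i ∈ range j, ξ i ω) ^ (2*q-1)) T μ := by
      have hcomp : IndepFun
          (fun ω => (σ j (fun k : (range j : Finset ℕ) => ξ k ω)) ^ (2*q-1))
          (fun ω => ψ (fun k : (Ico j n : Finset ℕ) => ξ k ω)) μ :=
        hFG.comp ((hσmeas j).pow_const (2*q-1)) hψmeas
      have e1 : (fun ω => (σ j (fun k : (range j : Finset ℕ) => ξ k ω)) ^ (2*q-1))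
          = fun ω => (∑ i ∈ range j, ξ i ω) ^ (2*q-1) := by
        funext ω; rw [hσS j (le_refl j) ω]
      have e2 : (fun ω => ψ (fun k : (Ico j n : Finset ℕ) => ξ k ω)) = T := funext hψT
      rwa [e1, e2] at hcomp
    exact hind.integrable_mul hSjpow hTint
  calc ∫ ω in Aset, (∑ i ∈ range j, ξ i ω) ^ (2*q) ∂μ
      = ∫ ω in Aset, (∑ i ∈ range j, ξ i ω) ^ (2*q) ∂μ
        + (2*q : ℝ) * ∫ ω in Aset, (∑ i ∈ range j, ξ i ω) ^ (2*q-1) * T ω ∂μ := by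
        rw [hsetT, mul_zero, add_zero]
    _ = ∫ ω in Aset, ((∑ i ∈ range j, ξ i ω) ^ (2*q)
        + (2*q : ℝ) * ((∑ i ∈ range j, ξ i ω) ^ (2*q-1) * T ω)) ∂μ := by
        rw [integral_add (hSjpow2.integrableOn) ((hSjTint.const_mul _).integrableOn)]
        rw [integral_const_mul]
    _ ≤ ∫ ω in Aset, (∑ i ∈ range n, ξ i ω) ^ (2*q) ∂μ := by
        refine setIntegral_mono_on
          ((hSjpow2.add (hSjTint.const_mul _)).integrableOn)
          (hSnpow2.integrableOn) hAm (fun ω _ => ?_)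
        rw [hST ω]
        have := tangent hq (∑ i ∈ range j, ξ i ω) (T ω)
        calc (∑ i ∈ range j, ξ i ω) ^ (2*q)
              + (2*q : ℝ) * ((∑ i ∈ range j, ξ i ω) ^ (2*q-1) * T ω)
            = (∑ i ∈ range j, ξ i ω) ^ (2*q)
              + (2*q : ℝ) * (∑ i ∈ range j, ξ i ω) ^ (2*q-1) * T ω := by ring
          _ ≤ ((∑ i ∈ range j, ξ i ω) + T ω) ^ (2*q) := this

set_option maxHeartbeats 1000000 in
lemma maximal (hq : 1 ≤ q) (hmeas : ∀ k, Measurable (ξ k))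
    (hindep : iIndepFun ξ μ)
    (hint : ∀ k, Integrable (ξ k) μ)
    (hcent : ∀ k, ∫ ω, ξ k ω ∂μ = 0)
    (h2q : ∀ k, Integrable (fun ω => (ξ k ω) ^ (2*q)) μ)
    {lam : ℝ} (hlam : 0 < lam) (n : ℕ) :
    lam ^ (2*q) * (μ {ω | ∃ k ≤ n, lam ≤ |∑ i ∈ range k, ξ i ω|}).toReal
      ≤ ∫ ω, (∑ k ∈ range n, ξ k ω) ^ (2*q) ∂μ := by
  classical
  set A : ℕ → Set Ω := fun j =>
    {ω | lam ≤ |∑ i ∈ range j, ξ i ω| ∧ ∀ i < j, |∑ k ∈ range i, ξ k ω| < lam} with hAdef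
  have hAm : ∀ j, MeasurableSet (A j) := fun j => meaA hmeas lam j
  have hdisj : (↑(range (n+1)) : Set ℕ).Pairwise (Function.onFun Disjoint A) := by
    have key : ∀ i j : ℕ, i < j → Disjoint (A i) (A j) := by
      intro i j h
      rw [Set.disjoint_left]
      rintro ω ⟨h1, _⟩ ⟨_, h4⟩
      exact absurd h1 (not_le.mpr (h4 i h))
    intro i _ j _ hij
    rcases lt_or_gt_of_ne hij with h | h
    · exact key i j h
    · exact (key j i h).symm
  have hG : ⋃ j ∈ range (n+1), A j = {ω | ∃ k ≤ n, lam ≤ |∑ i ∈ range k, ξ i ω|} := by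
    ext ω
    simp only [Set.mem_iUnion, Finset.mem_range, Set.mem_setOf_eq, hAdef]
    constructor
    · rintro ⟨j, hj, h1, _⟩
      exact ⟨j, by omega, h1⟩
    · rintro ⟨k, hk, hlamk⟩
      have hex : ∃ m, lam ≤ |∑ i ∈ range m, ξ i ω| := ⟨k, hlamk⟩
      refine ⟨Nat.find hex, ?_, Nat.find_spec hex, fun i hi => ?_⟩
      · have := Nat.find_min' hex hlamk
        omega
      · exact not_le.mp (Nat.find_min hex hi)
  have hSnpow2 : Integrable (fun ω => (∑ i ∈ range n, ξ i ω) ^ (2*q)) μ :=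
    integrable_pow_sum hq hmeas h2q (range n) (le_refl _)
  have hmeasure : μ {ω | ∃ k ≤ n, lam ≤ |∑ i ∈ range k, ξ i ω|}
      = ∑ j ∈ range (n+1), μ (A j) := by
    rw [← hG]
    exact measure_biUnion_finset hdisj (fun j _ => hAm j)
  have htR : (μ {ω | ∃ k ≤ n, lam ≤ |∑ i ∈ range k, ξ i ω|}).toReal
      = ∑ j ∈ range (n+1), (μ (A j)).toReal := by
    rw [hmeasure]
    exact ENNReal.toReal_sum fun j _ => measure_ne_top μ _
  have hstep1 : ∀ j ∈ range (n+1),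
      lam ^ (2*q) * (μ (A j)).toReal ≤ ∫ ω in A j, (∑ i ∈ range j, ξ i ω) ^ (2*q) ∂μ := by
    intro j _
    have hconst : ∫ (_ : Ω) in A j, lam ^ (2*q) ∂μ = lam ^ (2*q) * (μ (A j)).toReal := by
      rw [setIntegral_const, smul_eq_mul, measureReal_def]
      ring
    rw [← hconst]
    refine setIntegral_mono_on ((integrable_const _).integrableOn)
      ((integrable_pow_sum hq hmeas h2q (range j) (le_refl _)).integrableOn)
      (hAm j) (fun ω hω => ?_)
    have h1 : lam ≤ |∑ i ∈ range j, ξ i ω| := hω.1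
    calc lam ^ (2*q) ≤ |∑ i ∈ range j, ξ i ω| ^ (2*q) := pow_le_pow_left₀ hlam.le h1 _
      _ = (∑ i ∈ range j, ξ i ω) ^ (2*q) := Even.pow_abs (even_two_mul q) _
  have hstep2 : ∀ j ∈ range (n+1),
      ∫ ω in A j, (∑ i ∈ range j, ξ i ω) ^ (2*q) ∂μ
        ≤ ∫ ω in A j, (∑ i ∈ range n, ξ i ω) ^ (2*q) ∂μ := by
    intro j hj
    rw [Finset.mem_range] at hj
    exact key_step hq hmeas hindep hint hcent h2q lam (by omega)
  have hsum : ∑ j ∈ range (n+1), ∫ ω in A j, (∑ i ∈ range n, ξ i ω) ^ (2*q) ∂μ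
      = ∫ ω in ⋃ j ∈ range (n+1), A j, (∑ i ∈ range n, ξ i ω) ^ (2*q) ∂μ :=
    (integral_biUnion_finset (range (n+1)) (fun j _ => hAm j) hdisj
      (fun j _ => hSnpow2.integrableOn)).symm
  have hle : ∫ ω in ⋃ j ∈ range (n+1), A j, (∑ i ∈ range n, ξ i ω) ^ (2*q) ∂μ
      ≤ ∫ ω, (∑ i ∈ range n, ξ i ω) ^ (2*q) ∂μ :=
    setIntegral_le_integral hSnpow2
      (ae_of_all _ fun ω => Even.pow_nonneg (even_two_mul q) _)
  calc lam ^ (2*q) * (μ {ω | ∃ k ≤ n, lam ≤ |∑ i ∈ range k, ξ i ω|}).toReal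
      = ∑ j ∈ range (n+1), lam ^ (2*q) * (μ (A j)).toReal := by
        rw [htR, Finset.mul_sum]
    _ ≤ ∑ j ∈ range (n+1), ∫ ω in A j, (∑ i ∈ range j, ξ i ω) ^ (2*q) ∂μ :=
        Finset.sum_le_sum hstep1
    _ ≤ ∑ j ∈ range (n+1), ∫ ω in A j, (∑ i ∈ range n, ξ i ω) ^ (2*q) ∂μ :=
        Finset.sum_le_sum hstep2
    _ = ∫ ω in ⋃ j ∈ range (n+1), A j, (∑ i ∈ range n, ξ i ω) ^ (2*q) ∂μ := hsum
    _ ≤ ∫ ω, (∑ i ∈ range n, ξ i ω) ^ (2*q) ∂μ := hle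

lemma summable_dyadic {b : ℕ → ℝ} (hb : ∀ k, 0 ≤ b k) (q : ℕ)
    (hsum : Summable (fun k : ℕ => b k / ((k:ℝ)+1)^(q+1))) :
    Summable (fun m : ℕ => (((2:ℝ)^(q+1))⁻¹)^m * ∑ k ∈ range (2^(m+1)), b k) := by
  classical
  set r : ℝ := ((2:ℝ)^(q+1))⁻¹ with hrdef
  have hr0 : 0 < r := by positivity
  have hrhalf : r ≤ 1/2 := by
    rw [hrdef]
    rw [inv_le_comm₀ (by positivity) (by norm_num)]
    calc (1/2 : ℝ)⁻¹ = 2 := by norm_num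
      _ = (2:ℝ)^1 := (pow_one 2).symm
      _ ≤ (2:ℝ)^(q+1) := pow_le_pow_right₀ (by norm_num) (by omega)
  have hr1 : r < 1 := by linarith
  set g : ℕ × ℕ → ℝ := fun p => if p.2 < 2^(p.1+1) then r^p.1 * b p.2 else 0 with hgdef
  have hg0 : ∀ p, 0 ≤ g p := by
    intro p
    rw [hgdef]
    dsimp only
    split
    · exact mul_nonneg (by positivity) (hb _)
    · exact le_refl 0
  have hiff : ∀ k m : ℕ, (k < 2^(m+1) ↔ Nat.log 2 k ≤ m) := by
    intro k m
    rcases Nat.eq_zero_or_pos k with rfl | hk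
    · simp
    · rw [← Nat.log_lt_iff_lt_pow (by norm_num) (by omega)]
      omega
  have hcol : ∀ k, Summable (fun m => g (m, k)) := by
    intro k
    refine Summable.of_nonneg_of_le (fun m => hg0 _) (fun m => ?_)
      ((summable_geometric_of_lt_one hr0.le hr1).mul_right (b k))
    rw [hgdef]
    dsimp only
    split
    · exact le_refl _
    · exact mul_nonneg (by positivity) (hb _)
  have htail : ∀ k, ∑' m, g (m, k) ≤ (2:ℝ)^(q+2) * (b k / ((k:ℝ)+1)^(q+1)) := by
    intro k
    set L := Nat.log 2 k with hLdef
    have hsplit := (Summable.sum_add_tsum_nat_add (f := fun m => g (m, k)) L (hcol k)).symm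
    have hzero : ∑ i ∈ range L, g (i, k) = 0 := by
      refine Finset.sum_eq_zero fun i hi => ?_
      rw [Finset.mem_range] at hi
      rw [hgdef]
      dsimp only
      rw [if_neg]
      rw [hiff k i]
      omega
    have hterm : ∀ i : ℕ, g (i + L, k) = r^L * r^i * b k := by
      intro i
      rw [hgdef]
      dsimp only
      rw [if_pos (by rw [hiff k (i+L)]; omega)]
      rw [pow_add]
      ring
    have htsum : ∑' m, g (m, k) = r^L * (1-r)⁻¹ * b k := by
      rw [hsplit, hzero, zero_add]
      calc ∑' i, g (i + L, k) = ∑' i, r^L * b k * r^i := by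
            refine tsum_congr fun i => ?_
            rw [hterm i]; ring
        _ = r^L * b k * ∑' i, r^i := tsum_mul_left
        _ = r^L * b k * (1-r)⁻¹ := by rw [tsum_geometric_of_lt_one hr0.le hr1]
        _ = r^L * (1-r)⁻¹ * b k := by ring
    rw [htsum]
    have hinv2 : (1-r)⁻¹ ≤ 2 := by
      rw [inv_le_comm₀ (by linarith) (by norm_num)]
      linarith
    have hrL : r^L * ((k:ℝ)+1)^(q+1) ≤ (2:ℝ)^(q+1) := by
      have hk1 : ((k:ℝ)+1) ≤ (2:ℝ)^(L+1) := by
        have := Nat.lt_pow_succ_log_self (by norm_num : 1 < 2) k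
        have h2 : (k:ℝ) < (2:ℝ)^(L+1) := by exact_mod_cast this
        have h3 : (k:ℝ) + 1 ≤ (2:ℝ)^(L+1) := by
          have h4 : ((k+1 : ℕ) : ℝ) ≤ ((2^(L+1) : ℕ) : ℝ) := by exact_mod_cast this
          push_cast at h4
          linarith
        exact h3
      have hpow : ((k:ℝ)+1)^(q+1) ≤ ((2:ℝ)^(L+1))^(q+1) :=
        pow_le_pow_left₀ (by positivity) hk1 _
      have hrL2 : r^L = (((2:ℝ)^L)^(q+1))⁻¹ := by
        rw [hrdef, ← inv_pow, ← pow_mul, ← pow_mul]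
        congr 1
        ring_nf; norm_num
      calc r^L * ((k:ℝ)+1)^(q+1) ≤ r^L * ((2:ℝ)^(L+1))^(q+1) :=
            mul_le_mul_of_nonneg_left hpow (by positivity)
        _ = (((2:ℝ)^L)^(q+1))⁻¹ * ((2:ℝ)^(L+1))^(q+1) := by rw [hrL2]
        _ = (2:ℝ)^(q+1) := by
            have h2L : ((2:ℝ)^(L+1))^(q+1) = ((2:ℝ)^L)^(q+1) * (2:ℝ)^(q+1) := by
              rw [← mul_pow, ← pow_succ]
            rw [h2L, ← mul_assoc, inv_mul_cancel₀ (by positivity), one_mul]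
    have hrLb : r^L ≤ (2:ℝ)^(q+1) / ((k:ℝ)+1)^(q+1) := by
      rw [le_div_iff₀ (by positivity)]
      exact hrL
    calc r^L * (1-r)⁻¹ * b k ≤ r^L * 2 * b k := by
          refine mul_le_mul_of_nonneg_right ?_ (hb k)
          exact mul_le_mul_of_nonneg_left hinv2 (by positivity)
      _ ≤ ((2:ℝ)^(q+1) / ((k:ℝ)+1)^(q+1)) * 2 * b k := by
          have h9 : r^L * 2 ≤ ((2:ℝ)^(q+1) / ((k:ℝ)+1)^(q+1)) * 2 := by linarith [hrLb]
          exact mul_le_mul_of_nonneg_right h9 (hb k)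
      _ = (2:ℝ)^(q+2) * (b k / ((k:ℝ)+1)^(q+1)) := by
          ring
  have hrow : Summable (fun k => ∑' m, g (m, k)) := by
    refine Summable.of_nonneg_of_le (fun k => tsum_nonneg fun m => hg0 _) htail ?_
    exact hsum.mul_left _
  have hgswap : Summable (fun p : ℕ × ℕ => g (p.2, p.1)) := by
    refine (summable_prod_of_nonneg (fun p => hg0 _)).mpr ⟨fun k => hcol k, ?_⟩
    exact hrow
  have hgsum : Summable g := by
    have := (Equiv.prodComm ℕ ℕ).summable_iff.mpr hgswap
    have heq : ((fun p : ℕ × ℕ => g (p.2, p.1)) ∘ (Equiv.prodComm ℕ ℕ)) = g := by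
      funext p
      rfl
    rwa [heq] at this
  have hfinal := ((summable_prod_of_nonneg hg0).mp hgsum).2
  have heq2 : (fun m => ∑' k, g (m, k))
      = fun m : ℕ => (((2:ℝ)^(q+1))⁻¹)^m * ∑ k ∈ range (2^(m+1)), b k := by
    funext m
    have h1 : ∑' k, g (m, k) = ∑ k ∈ range (2^(m+1)), g (m, k) := by
      refine tsum_eq_sum fun k hk => ?_
      rw [Finset.mem_range, not_lt] at hk
      rw [hgdef]
      dsimp only
      rw [if_neg (by omega)]
    rw [h1]
    rw [Finset.mul_sum]
    refine Finset.sum_congr rfl fun k hk => ?_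
    rw [Finset.mem_range] at hk
    rw [hgdef]
    dsimp only
    rw [if_pos hk]
  rwa [heq2] at hfinal

end BrunkAux


set_option maxHeartbeats 1000000 in
/-- **Brunk–Prohorov theorem (dimension one).** -/
theorem brunk_prohorov_dim_one
    {Ω : Type*} [MeasurableSpace Ω] {μ : Measure Ω} [IsProbabilityMeasure μ]
    (q : ℕ) (hq : 1 ≤ q)
    (ξ : ℕ → Ω → ℝ)
    (hmeas : ∀ k, Measurable (ξ k))
    (hindep : iIndepFun ξ μ)
    (hint : ∀ k, Integrable (ξ k) μ)
    (hcent : ∀ k, ∫ ω, ξ k ω ∂μ = 0)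
    (h2q : ∀ k, Integrable (fun ω => (ξ k ω) ^ (2 * q)) μ)
    (hsum : Summable (fun k : ℕ =>
      (∫ ω, (ξ k ω) ^ (2 * q) ∂μ) / ((k : ℝ) + 1) ^ (q + 1))) :
    ∀ᵐ ω ∂μ, Filter.Tendsto
      (fun n : ℕ => (∑ k ∈ Finset.range n, ξ k ω) / (n : ℝ))
      Filter.atTop (nhds 0) := by
  classical
  have hb0 : ∀ k, 0 ≤ ∫ ω, (ξ k ω) ^ (2*q) ∂μ :=
    fun k => integral_nonneg fun ω => Even.pow_nonneg (even_two_mul q) _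
  have hdyadic := BrunkAux.summable_dyadic hb0 q hsum
  have hae : ∀ j : ℕ, ∀ᵐ ω ∂μ, ∀ᶠ m in atTop,
      ω ∉ {ω | ∃ k ≤ 2^(m+1), (1:ℝ)/((j:ℝ)+1) * 2^m ≤ |∑ i ∈ range k, ξ i ω|} := by
    intro j
    set ε : ℝ := (1:ℝ)/((j:ℝ)+1) with hεdef
    have hε0 : 0 < ε := by positivity
    have hεcancel : ε * ((j:ℝ)+1) = 1 := by
      rw [hεdef]; field_simp
    set u : ℕ → ℝ := fun m => (((2:ℝ)^q + 2)^(2*q) * 2^(q-1) * ((j:ℝ)+1)^(2*q)) *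
      ((((2:ℝ)^(q+1))⁻¹)^m * ∑ k ∈ range (2^(m+1)), ∫ ω, (ξ k ω)^(2*q) ∂μ) with hudef
    have hu0 : ∀ m, 0 ≤ u m := by
      intro m
      rw [hudef]
      have hBpos : 0 ≤ ∑ k ∈ range (2^(m+1)), ∫ ω, (ξ k ω)^(2*q) ∂μ :=
        Finset.sum_nonneg fun k _ => hb0 k
      positivity
    have husum : Summable u := hdyadic.mul_left _
    have hbound : ∀ m : ℕ,
        (μ {ω | ∃ k ≤ 2^(m+1), ε * 2^m ≤ |∑ i ∈ range k, ξ i ω|}).toReal ≤ u m := by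
      intro m
      have hlam : (0:ℝ) < ε * 2^m := by positivity
      have hmax := BrunkAux.maximal hq hmeas hindep hint hcent h2q hlam (2^(m+1))
      have hmom := BrunkAux.moment_bound' hq hmeas hindep hcent h2q (2^(m+1))
      have hlampow : (0:ℝ) < (ε * 2^m)^(2*q) := by positivity
      have hprod : (ε * 2^m)^(2*q) * u m
          = ((2:ℝ)^q + 2)^(2*q) * (((2^(m+1) : ℕ) : ℝ)^(q-1)
            * ∑ k ∈ range (2^(m+1)), ∫ ω, (ξ k ω)^(2*q) ∂μ) := by
        have hN : ((2^(m+1) : ℕ) : ℝ) = (2:ℝ)^(m+1) := by push_cast; ring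
        rw [hN, hudef]
        have e1 : (ε * (2:ℝ)^m)^(2*q) = ε^(2*q) * ((2:ℝ)^m)^(2*q) := mul_pow _ _ _
        have e2 : ε^(2*q) * ((j:ℝ)+1)^(2*q) = 1 := by
          rw [← mul_pow, hεcancel, one_pow]
        have e3 : (((2:ℝ)^(q+1))⁻¹)^m = ((2:ℝ)^((q+1)*m))⁻¹ := by
          rw [inv_pow, ← pow_mul]
        have e4 : ((2:ℝ)^m)^(2*q) = (2:ℝ)^(m*(2*q)) := (pow_mul _ _ _).symm
        have e5 : ((2:ℝ)^(m+1))^(q-1) = (2:ℝ)^((m+1)*(q-1)) := (pow_mul _ _ _).symm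
        have key : (2:ℝ)^(m*(2*q)) * (2:ℝ)^(q-1) * ((2:ℝ)^((q+1)*m))⁻¹
            = (2:ℝ)^((m+1)*(q-1)) := by
          rw [inv_eq_one_div, mul_one_div, eq_comm, eq_div_iff (by positivity),
            ← pow_add, ← pow_add]
          congr 1
          obtain ⟨q', rfl⟩ : ∃ q', q = q' + 1 := ⟨q - 1, by omega⟩
          simp only [Nat.add_sub_cancel]
          ring
        calc (ε * (2:ℝ)^m)^(2*q) * ((((2:ℝ)^q + 2)^(2*q) * 2^(q-1) * ((j:ℝ)+1)^(2*q)) *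
              ((((2:ℝ)^(q+1))⁻¹)^m * ∑ k ∈ range (2^(m+1)), ∫ ω, (ξ k ω)^(2*q) ∂μ))
            = (ε^(2*q) * ((j:ℝ)+1)^(2*q)) * (((2:ℝ)^q + 2)^(2*q)
              * (((2:ℝ)^(m*(2*q)) * (2:ℝ)^(q-1) * ((2:ℝ)^((q+1)*m))⁻¹)
                * ∑ k ∈ range (2^(m+1)), ∫ ω, (ξ k ω)^(2*q) ∂μ)) := by
              rw [e1, e3, e4]; ring
          _ = ((2:ℝ)^q + 2)^(2*q) * (((2:ℝ)^(m+1))^(q-1)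
              * ∑ k ∈ range (2^(m+1)), ∫ ω, (ξ k ω)^(2*q) ∂μ) := by
              rw [e2, key]; ring
      have hchain : (ε * 2^m)^(2*q)
          * (μ {ω | ∃ k ≤ 2^(m+1), ε * 2^m ≤ |∑ i ∈ range k, ξ i ω|}).toReal
          ≤ (ε * 2^m)^(2*q) * u m := by
        rw [hprod]
        exact hmax.trans hmom
      exact le_of_mul_le_mul_left hchain hlampow
    have htsum : (∑' m, μ {ω | ∃ k ≤ 2^(m+1), ε * 2^m ≤ |∑ i ∈ range k, ξ i ω|}) ≠ ∞ := by
      have h1 : ∀ m, μ {ω | ∃ k ≤ 2^(m+1), ε * 2^m ≤ |∑ i ∈ range k, ξ i ω|}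
          ≤ ENNReal.ofReal (u m) := by
        intro m
        rw [← ENNReal.ofReal_toReal (measure_ne_top μ _)]
        exact ENNReal.ofReal_le_ofReal (hbound m)
      have h2 : (∑' m, μ {ω | ∃ k ≤ 2^(m+1), ε * 2^m ≤ |∑ i ∈ range k, ξ i ω|})
          ≤ ∑' m, ENNReal.ofReal (u m) := ENNReal.tsum_le_tsum h1
      have h3 : ∑' m, ENNReal.ofReal (u m) = ENNReal.ofReal (∑' m, u m) :=
        (ENNReal.ofReal_tsum_of_nonneg hu0 husum).symm
      rw [h3] at h2
      exact ne_top_of_le_ne_top ENNReal.ofReal_ne_top h2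
    exact ae_eventually_notMem htsum
  have haeall : ∀ᵐ ω ∂μ, ∀ j : ℕ, ∀ᶠ m in atTop,
      ω ∉ {ω | ∃ k ≤ 2^(m+1), (1:ℝ)/((j:ℝ)+1) * 2^m ≤ |∑ i ∈ range k, ξ i ω|} :=
    ae_all_iff.mpr hae
  filter_upwards [haeall] with ω hω
  rw [NormedAddCommGroup.tendsto_nhds_zero]
  intro ε' hε'
  obtain ⟨j, hj⟩ := exists_nat_one_div_lt hε'
  obtain ⟨M, hM⟩ := eventually_atTop.mp (hω j)
  rw [eventually_atTop]
  refine ⟨2^(M+1), fun n hn => ?_⟩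
  have hn1 : 1 ≤ n := le_trans Nat.one_le_two_pow hn
  set m := Nat.log 2 n with hmdef
  have hm1 : 2^m ≤ n := Nat.pow_log_le_self 2 (by omega)
  have hm2 : n < 2^(m+1) := Nat.lt_pow_succ_log_self (by norm_num) n
  have hmM : M ≤ m := by
    by_contra hc
    push_neg at hc
    have hle : 2^(m+1) ≤ 2^(M+1) := Nat.pow_le_pow_right (by norm_num) (by omega)
    omega
  have hnotE := hM m hmM
  push_neg at hnotE
  have hkey := hnotE n (le_of_lt hm2)
  have hn0 : (0:ℝ) < (n:ℝ) := by exact_mod_cast Nat.pos_of_ne_zero (by omega)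
  have h2mn : ((2:ℝ)^m) ≤ (n:ℝ) := by exact_mod_cast hm1
  rw [Real.norm_eq_abs, abs_div, abs_of_nonneg hn0.le]
  have hdiv : |∑ k ∈ range n, ξ k ω| / (n:ℝ) < (1:ℝ)/((j:ℝ)+1) := by
    rw [div_lt_iff₀ hn0]
    calc |∑ k ∈ range n, ξ k ω| < (1:ℝ)/((j:ℝ)+1) * 2^m := hkey
      _ ≤ (1:ℝ)/((j:ℝ)+1) * n := mul_le_mul_of_nonneg_left h2mn (by positivity)
  linarith [hdiv, hj]
end

section
/- Let r ≥ 1 be an integer and α ∈ (1,2]. Let {Z_n : n ∈ ℕ^r} be a random field with E|Z_n|^α < ∞ whose rectangular partial sums S_n = Σ_{k≤n} Z_k form a multiparameter martingale: for all n, m ∈ ℕ^r, the conditional expectation of S_n given the σ-algebra generated by {S_k : k ≤ m} equals S_{n∧m} almost surely, where n∧m is the coordinatewise minimum. Then for every N ∈ ℕ^r, E|S_N|^α ≤ 2^r Σ_{k≤N} E|Z_k|^α. -/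
open MeasureTheory ProbabilityTheory Finset Filter Topology
open scoped NNReal ENNReal

/-- The σ-algebra generated by the partial sums `S_k`, `k ≤ m`. -/
def sigmaOfSums {r : ℕ} {Ω : Type*} (S : (Fin r → ℕ) → Ω → ℝ) (m : Fin r → ℕ) :
    MeasurableSpace Ω :=
  ⨆ k ∈ Finset.Icc (1 : Fin r → ℕ) m, MeasurableSpace.comap (S k) inferInstance

namespace VBE

variable {α : ℝ}

/-- Tangent-line inequality for `|·| ^ α` at a nonnegative point `c`. -/
lemma tangent_le (hα : 1 < α) {c : ℝ} (hc : 0 ≤ c) (x : ℝ) :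
    α * c ^ (α - 1) * x + (1 - α) * c ^ α ≤ |x| ^ α := by
  have hα0 : (0:ℝ) < α := by linarith
  rcases eq_or_lt_of_le hc with hc0 | hc0
  · rw [← hc0]
    rw [Real.zero_rpow (by linarith : α - 1 ≠ 0), Real.zero_rpow hα0.ne']
    have : (0:ℝ) ≤ |x| ^ α := Real.rpow_nonneg (abs_nonneg x) α
    nlinarith
  · -- Bernoulli at u = |x|, v = c > 0
    have hu : 0 ≤ |x| := abs_nonneg x
    have hcc : c ^ (α - 1) * c = c ^ α := by
      have := Real.rpow_add_one hc0.ne' (α - 1)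
      rw [sub_add_cancel] at this
      exact this.symm
    have key : c ^ α + α * c ^ (α - 1) * (|x| - c) ≤ |x| ^ α := by
      have hs : (-1:ℝ) ≤ |x| / c - 1 := by
        have : (0:ℝ) ≤ |x| / c := by positivity
        linarith
      have hb := one_add_mul_self_le_rpow_one_add hs hα.le
      have h1 : (1 : ℝ) + (|x| / c - 1) = |x| / c := by ring
      rw [h1] at hb
      have hcα : (0:ℝ) < c ^ α := Real.rpow_pos_of_pos hc0 α
      have hb2 : (1 + α * (|x| / c - 1)) * c ^ α ≤ (|x| / c) ^ α * c ^ α :=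
        mul_le_mul_of_nonneg_right hb hcα.le
      have hdiv : (|x| / c) ^ α * c ^ α = |x| ^ α := by
        rw [Real.div_rpow hu hc0.le, div_mul_cancel₀]
        exact hcα.ne'
      rw [hdiv] at hb2
      calc c ^ α + α * c ^ (α - 1) * (|x| - c)
          = (1 + α * (|x| / c - 1)) * c ^ α := by
            field_simp
            linear_combination (α * (|x| - c)) * hcc
        _ ≤ |x| ^ α := hb2
    have hmid : α * c ^ (α - 1) * x ≤ α * c ^ (α - 1) * |x| := by
      have : (0:ℝ) ≤ α * c ^ (α - 1) := by positivity
      exact mul_le_mul_of_nonneg_left (le_abs_self x) this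
    nlinarith [key, hmid, hcc]

variable {α : ℝ}

lemma core_recover (hα : 1 < α) {s c : ℝ} (hs : 0 < s)
    (h : ∀ q : ℚ, 0 < (q:ℝ) → α * (q:ℝ) ^ (α - 1) * s + (1 - α) * (q:ℝ) ^ α ≤ c) :
    s ^ α ≤ c := by
  -- choose rationals qₙ ∈ (s - s/(n+1), s)
  have hex : ∀ n : ℕ, ∃ q : ℚ, s - s / (n + 1) < (q:ℝ) ∧ (q:ℝ) < s := by
    intro n
    apply exists_rat_btwn
    have : 0 < s / (n+1) := by positivity
    linarith
  choose u hu1 hu2 using hex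
  have hupos : ∀ n, 0 < ((u n : ℝ)) := by
    intro n
    have h1 : s / (n+1) ≤ s := by
      rw [div_le_iff₀ (by positivity : (0:ℝ) < (n:ℝ)+1)]
      nlinarith [Nat.cast_nonneg (α := ℝ) n]
    have := hu1 n
    linarith
  have htend : Tendsto (fun n => (u n : ℝ)) atTop (𝓝 s) := by
    have hlow : Tendsto (fun n : ℕ => s - s / (n + 1)) atTop (𝓝 s) := by
      have : Tendsto (fun n : ℕ => s / (n + 1)) atTop (𝓝 0) := by
        have h0 := tendsto_one_div_add_atTop_nhds_zero_nat.const_mul s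
        simpa [div_eq_mul_inv, mul_zero, one_div, mul_comm] using h0
      simpa using tendsto_const_nhds.sub this
    exact tendsto_of_tendsto_of_tendsto_of_le_of_le hlow tendsto_const_nhds
      (fun n => (hu1 n).le) (fun n => (hu2 n).le)
  -- f q = α q^(α-1) s + (1-α) q^α is continuous at s and f s = s^α
  set f : ℝ → ℝ := fun q => α * q ^ (α - 1) * s + (1 - α) * q ^ α with hf
  have hfs : f s = s ^ α := by
    have h1 : s ^ (α - 1) * s = s ^ α := by
      have := Real.rpow_add_one hs.ne' (α - 1)
      rw [sub_add_cancel] at this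
      exact this.symm
    simp only [hf]
    nlinarith [h1]
  have hcont : ContinuousAt f s := by
    have h1 : ContinuousAt (fun q : ℝ => q ^ (α - 1)) s :=
      Real.continuousAt_rpow_const s (α - 1) (Or.inl hs.ne')
    have h2 : ContinuousAt (fun q : ℝ => q ^ α) s :=
      Real.continuousAt_rpow_const s α (Or.inl hs.ne')
    exact (((continuousAt_const.mul h1).mul continuousAt_const).add
      (continuousAt_const.mul h2))
  have : Tendsto (fun n => f (u n)) atTop (𝓝 (s ^ α)) := by
    rw [← hfs]
    exact hcont.tendsto.comp htend
  exact le_of_tendsto this (Eventually.of_forall fun n => h (u n) (hupos n))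

/-- Recover `|t| ^ α ≤ c` from the countable family of rational tangent bounds. -/
lemma recover (hα : 1 < α) {t c : ℝ}
    (h : ∀ q : ℚ, α * |(q:ℝ)| ^ (α - 1) * ((if 0 ≤ q then (1:ℝ) else -1) * t)
      + (1 - α) * |(q:ℝ)| ^ α ≤ c) : |t| ^ α ≤ c := by
  rcases lt_trichotomy t 0 with ht | ht | ht
  · have : ∀ q : ℚ, 0 < (q:ℝ) → α * (q:ℝ) ^ (α - 1) * (-t) + (1 - α) * (q:ℝ) ^ α ≤ c := by
      intro q hq
      have h' := h (-q)
      have hq0 : ¬ (0:ℚ) ≤ -q := by push_neg; exact_mod_cast neg_neg_iff_pos.mpr (by exact_mod_cast hq)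
      rw [if_neg hq0] at h'
      have habs : |((-q : ℚ) : ℝ)| = (q:ℝ) := by
        push_cast
        rw [abs_neg, abs_of_pos hq]
      rw [habs] at h'
      linarith [h']
    have := core_recover hα (neg_pos.mpr ht) this
    rwa [abs_of_neg ht]
  · subst ht
    have h0 := h 0
    simp only [Rat.cast_zero, abs_zero, le_refl, if_pos] at h0
    rw [Real.zero_rpow (by linarith : α - 1 ≠ 0), Real.zero_rpow (by linarith : α ≠ 0)] at h0
    rw [abs_zero, Real.zero_rpow (by linarith : α ≠ 0)]
    linarith [h0]
  · have : ∀ q : ℚ, 0 < (q:ℝ) → α * (q:ℝ) ^ (α - 1) * t + (1 - α) * (q:ℝ) ^ α ≤ c := by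
      intro q hq
      have h' := h q
      have hq0 : (0:ℚ) ≤ q := by exact_mod_cast hq.le
      rw [if_pos hq0] at h'
      have habs : |(q:ℝ)| = (q:ℝ) := abs_of_pos hq
      rw [habs] at h'
      linarith [h']
    have := core_recover hα ht this
    rwa [abs_of_pos ht]

variable {α : ℝ}

lemma nn_concave_step {s : ℝ} (hs0 : 0 < s) (hs1 : s ≤ 1) (X Y : ℝ≥0) :
    X ^ s + Y ^ s ≤ 2 * ((X + Y) / 2) ^ s := by
  have hp : (1:ℝ) ≤ 1 / s := (one_le_div hs0).mpr hs1
  have h := NNReal.arith_mean_le_rpow_mean (Finset.univ : Finset (Fin 2))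
    ![1/2, 1/2] ![X ^ s, Y ^ s] (by rw [Fin.sum_univ_two]; rw [← NNReal.coe_inj]; push_cast; norm_num) hp
  rw [Fin.sum_univ_two, Fin.sum_univ_two] at h
  simp only [Matrix.cons_val_zero, Matrix.cons_val_one, Matrix.head_cons] at h
  have hXs : (X ^ s) ^ (1/s) = X := by
    rw [← NNReal.rpow_mul, mul_one_div_cancel hs0.ne', NNReal.rpow_one]
  have hYs : (Y ^ s) ^ (1/s) = Y := by
    rw [← NNReal.rpow_mul, mul_one_div_cancel hs0.ne', NNReal.rpow_one]
  rw [hXs, hYs, one_div_one_div] at h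
  have h2 : (1:ℝ≥0)/2 * X + 1/2 * Y = (X + Y)/2 := by
    rw [← NNReal.coe_inj]; push_cast; ring
  rw [h2] at h
  calc X ^ s + Y ^ s = 2 * (1/2 * (X ^ s) + 1/2 * (Y ^ s)) := by
        rw [← NNReal.coe_inj]; push_cast; ring
    _ ≤ 2 * ((X + Y)/2) ^ s := by
        exact mul_le_mul_of_nonneg_left h (by norm_num)

lemma real_concave_step {s : ℝ} (hs0 : 0 < s) (hs1 : s ≤ 1) {x y : ℝ}
    (hx : 0 ≤ x) (hy : 0 ≤ y) : x ^ s + y ^ s ≤ 2 * ((x + y) / 2) ^ s := by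
  have h := nn_concave_step hs0 hs1 x.toNNReal y.toNNReal
  have := NNReal.coe_le_coe.mpr h
  push_cast [NNReal.coe_rpow, Real.coe_toNNReal x hx, Real.coe_toNNReal y hy] at this
  exact this

lemma real_subadd {s : ℝ} (hs0 : 0 ≤ s) (hs1 : s ≤ 1) {x y : ℝ}
    (hx : 0 ≤ x) (hy : 0 ≤ y) : (x + y) ^ s ≤ x ^ s + y ^ s := by
  have h := NNReal.rpow_add_le_add_rpow x.toNNReal y.toNNReal hs0 hs1
  have := NNReal.coe_le_coe.mpr h
  push_cast [NNReal.coe_rpow, Real.coe_toNNReal x hx, Real.coe_toNNReal y hy] at this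
  exact this

lemma sq_rpow_half (x : ℝ) : (x ^ 2) ^ (α / 2) = |x| ^ α := by
  rw [← sq_abs, ← Real.rpow_natCast |x| 2, ← Real.rpow_mul (abs_nonneg x)]
  congr 1
  ring

/-- Pointwise Clarkson-type inequality for `1 ≤ α ≤ 2`. -/
lemma clarkson (hα1 : 1 ≤ α) (hα2 : α ≤ 2) (a b : ℝ) :
    |a + b| ^ α + |a - b| ^ α ≤ 2 * (|a| ^ α + |b| ^ α) := by
  set s := α / 2 with hs
  have hs0 : 0 < s := by rw [hs]; linarith
  have hs1 : s ≤ 1 := by rw [hs]; linarith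
  have e1 : |a + b| ^ α = ((a+b)^2) ^ s := (sq_rpow_half (a+b)).symm
  have e2 : |a - b| ^ α = ((a-b)^2) ^ s := (sq_rpow_half (a-b)).symm
  have e3 : |a| ^ α = (a^2) ^ s := (sq_rpow_half a).symm
  have e4 : |b| ^ α = (b^2) ^ s := (sq_rpow_half b).symm
  rw [e1, e2, e3, e4]
  have step1 : ((a+b)^2) ^ s + ((a-b)^2) ^ s ≤ 2 * (a^2 + b^2) ^ s := by
    have h := real_concave_step hs0 hs1 (sq_nonneg (a+b)) (sq_nonneg (a-b))
    have hmid : ((a+b)^2 + (a-b)^2)/2 = a^2 + b^2 := by ring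
    rwa [hmid] at h
  have step2 : (a^2 + b^2) ^ s ≤ (a^2) ^ s + (b^2) ^ s :=
    real_subadd hs0.le hs1 (sq_nonneg a) (sq_nonneg b)
  calc ((a+b)^2) ^ s + ((a-b)^2) ^ s ≤ 2 * (a^2 + b^2) ^ s := step1
    _ ≤ 2 * ((a^2) ^ s + (b^2) ^ s) := by linarith

section Prob

variable {α : ℝ} {Ω : Type*} {G m0 : MeasurableSpace Ω} {μ : Measure Ω} [IsProbabilityMeasure μ]

omit G in
lemma memLp_iff_int (hα1 : 1 < α) {f : Ω → ℝ} (hf : AEStronglyMeasurable f μ) :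
    MemLp f (ENNReal.ofReal α) μ ↔ Integrable (fun ω => |f ω| ^ α) μ := by
  have hq0 : (ENNReal.ofReal α) ≠ 0 := by
    simp only [ne_eq, ENNReal.ofReal_eq_zero, not_le]; linarith
  have hqt : (ENNReal.ofReal α) ≠ ∞ := ENNReal.ofReal_ne_top
  rw [← memLp_one_iff_integrable]
  have h := memLp_norm_rpow_iff (p := ENNReal.ofReal α) (q := ENNReal.ofReal α) hf hq0 hqt
  rw [ENNReal.div_self hq0 hqt] at h
  rw [← h]
  have : (fun ω => ‖f ω‖ ^ (ENNReal.ofReal α).toReal) = fun ω => |f ω| ^ α := by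
    funext ω
    rw [Real.norm_eq_abs, ENNReal.toReal_ofReal (by linarith : (0:ℝ) ≤ α)]
  rw [this]

/-- Conditional Jensen inequality for `|·| ^ α`, in integrated form. -/
lemma jensen (hα1 : 1 < α) (hG : G ≤ m0) {W : Ω → ℝ}
    (hW : Integrable W μ) (hWα : Integrable (fun ω => |W ω| ^ α) μ) :
    ∫ ω, |(μ[W|G]) ω| ^ α ∂μ ≤ ∫ ω, |W ω| ^ α ∂μ := by
  set X := μ[W|G] with hX
  set g := μ[fun ω => |W ω| ^ α|G] with hg
  have hq : ∀ q : ℚ, ∀ᵐ ω ∂μ,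
      α * |(q:ℝ)| ^ (α-1) * ((if 0 ≤ q then (1:ℝ) else -1) * X ω)
        + (1-α) * |(q:ℝ)| ^ α ≤ g ω := by
    intro q
    set c : ℝ := α * |(q:ℝ)| ^ (α-1) * (if 0 ≤ q then (1:ℝ) else -1) with hc
    set b : ℝ := (1-α) * |(q:ℝ)| ^ α with hb
    have hint : Integrable (fun ω => c * W ω + b) μ := (hW.const_mul c).add (integrable_const b)
    have hLle : (fun ω => c * W ω + b) ≤ᵐ[μ] fun ω => |W ω| ^ α := by
      refine Eventually.of_forall fun ω => ?_
      have := tangent_le hα1 (abs_nonneg (q:ℝ)) ((if 0 ≤ q then (1:ℝ) else -1) * W ω)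
      have habs : |(if 0 ≤ q then (1:ℝ) else -1) * W ω| = |W ω| := by
        split <;> simp [abs_neg]
      rw [habs] at this
      calc c * W ω + b = α * |(q:ℝ)| ^ (α-1) * ((if 0 ≤ q then (1:ℝ) else -1) * W ω)
            + (1-α) * |(q:ℝ)| ^ α := by rw [hc, hb]; ring
        _ ≤ |W ω| ^ α := this
    have hmono := condExp_mono (m := G) hint hWα hLle
    have hcW : μ[fun ω => c * W ω + b|G] =ᵐ[μ] fun ω => c * X ω + b := by
      have h1 : μ[fun ω => c * W ω + b|G]
          =ᵐ[μ] μ[fun ω => c * W ω|G] + μ[fun _ => b|G] :=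
        condExp_add (hW.const_mul c) (integrable_const b) G
      have h2 : μ[fun ω => c * W ω|G] =ᵐ[μ] fun ω => c * X ω := by
        have := condExp_smul (μ := μ) (m := G) (c : ℝ) W
        exact this
      have h3 : μ[fun _ : Ω => b|G] = fun _ => b := condExp_const hG b
      filter_upwards [h1, h2] with ω e1 e2
      rw [e1]
      simp only [Pi.add_apply, e2, h3]
    filter_upwards [hmono, hcW] with ω e1 e2
    have : c * X ω + b ≤ g ω := by rw [← e2]; exact e1
    calc α * |(q:ℝ)| ^ (α-1) * ((if 0 ≤ q then (1:ℝ) else -1) * X ω) + (1-α) * |(q:ℝ)| ^ α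
        = c * X ω + b := by rw [hc, hb]; ring
      _ ≤ g ω := this
  have key : ∀ᵐ ω ∂μ, |X ω| ^ α ≤ g ω := by
    have hall := (ae_all_iff).mpr hq
    filter_upwards [hall] with ω hω
    exact recover hα1 fun q => hω q
  calc ∫ ω, |X ω| ^ α ∂μ ≤ ∫ ω, g ω ∂μ := by
        refine integral_mono_of_nonneg ?_ integrable_condExp key
        exact Eventually.of_forall fun ω => Real.rpow_nonneg (abs_nonneg _) α
    _ = ∫ ω, |W ω| ^ α ∂μ := integral_condExp hG

/-- One-step von Bahr–Esseen inequality. -/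
lemma vbe_step (hα1 : 1 < α) (hα2 : α ≤ 2) (hG : G ≤ m0)
    {X Y : Ω → ℝ} (hXm : MemLp X (ENNReal.ofReal α) μ)
    (hYm : MemLp Y (ENNReal.ofReal α) μ)
    (hX : μ[X|G] =ᵐ[μ] X) (hY : μ[Y|G] =ᵐ[μ] 0) :
    ∫ ω, |X ω + Y ω| ^ α ∂μ ≤ ∫ ω, |X ω| ^ α ∂μ + 2 * ∫ ω, |Y ω| ^ α ∂μ := by
  have h1le : (1:ℝ≥0∞) ≤ ENNReal.ofReal α := by
    rw [ENNReal.one_le_ofReal]; linarith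
  have hXint : Integrable X μ := hXm.integrable h1le
  have hYint : Integrable Y μ := hYm.integrable h1le
  have iXα : Integrable (fun ω => |X ω| ^ α) μ := (memLp_iff_int hα1 hXm.1).mp hXm
  have iYα : Integrable (fun ω => |Y ω| ^ α) μ := (memLp_iff_int hα1 hYm.1).mp hYm
  have iXYα : Integrable (fun ω => |X ω + Y ω| ^ α) μ := by
    have := (memLp_iff_int hα1 (hXm.add hYm).1).mp (hXm.add hYm)
    simpa [Pi.add_apply] using this
  have iXmYα : Integrable (fun ω => |X ω - Y ω| ^ α) μ := by
    have := (memLp_iff_int hα1 (hXm.sub hYm).1).mp (hXm.sub hYm)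
    simpa [Pi.sub_apply] using this
  -- Jensen part : ∫ |X|^α ≤ ∫ |X - Y|^α
  have hcondXY : μ[X - Y|G] =ᵐ[μ] X := by
    have h1 := condExp_sub (μ := μ) (m := G) hXint hYint
    refine h1.trans ?_
    filter_upwards [hX, hY] with ω e1 e2
    simp [e1, e2]
  have hjen : ∫ ω, |X ω| ^ α ∂μ ≤ ∫ ω, |X ω - Y ω| ^ α ∂μ := by
    have hWα : Integrable (fun ω => |(X - Y) ω| ^ α) μ := by
      simpa [Pi.sub_apply] using iXmYα
    have h := jensen hα1 hG (hXint.sub hYint) hWα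
    have e : ∫ ω, |(μ[X - Y|G]) ω| ^ α ∂μ = ∫ ω, |X ω| ^ α ∂μ := by
      refine integral_congr_ae ?_
      filter_upwards [hcondXY] with ω e1
      rw [e1]
    rw [e] at h
    refine h.trans_eq ?_
    simp [Pi.sub_apply]
  -- Clarkson part
  have hclark : ∫ ω, |X ω + Y ω| ^ α ∂μ + ∫ ω, |X ω - Y ω| ^ α ∂μ ≤
      2 * ∫ ω, |X ω| ^ α ∂μ + 2 * ∫ ω, |Y ω| ^ α ∂μ := by
    have h := integral_mono (iXYα.add iXmYα) ((iXα.add iYα).const_mul 2)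
      (fun ω => clarkson hα1.le hα2 (X ω) (Y ω))
    simp only [Pi.add_apply] at h
    rw [integral_add iXYα iXmYα, integral_const_mul, integral_add iXα iYα] at h
    linarith
  linarith

end Prob

section Main

variable {r : ℕ} {Ω : Type*} [m0 : MeasurableSpace Ω] {μ : Measure Ω} [IsProbabilityMeasure μ]

/-- The box of indices with coordinates in `A` fixed at `u i`, others ranging in `[1, u i]`. -/
def box (A : Finset (Fin r)) (u : Fin r → ℕ) : Finset (Fin r → ℕ) :=
  Finset.Icc (fun i => if i ∈ A then u i else 1) u

lemma mem_box {A : Finset (Fin r)} {u k : Fin r → ℕ} :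
    k ∈ box A u ↔ ∀ i, (if i ∈ A then u i else 1) ≤ k i ∧ k i ≤ u i := by
  simp only [box, Finset.mem_Icc, Pi.le_def, Pi.one_apply]
  exact forall_and.symm

lemma one_le_of_mem_box {A : Finset (Fin r)} {u k : Fin r → ℕ}
    (hu : ∀ i ∈ A, 1 ≤ u i) (hk : k ∈ box A u) : ∀ i, 1 ≤ k i := by
  intro i
  have h := (mem_box.mp hk i).1
  by_cases hiA : i ∈ A
  · rw [if_pos hiA] at h; exact le_trans (hu i hiA) h
  · rwa [if_neg hiA] at h

lemma box_insert_eq {A : Finset (Fin r)} {j : Fin r} (hj : j ∉ A) {u : Fin r → ℕ}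
    (hu : 1 ≤ u j) :
    box (insert j A) u = (box A u).filter (fun k => k j = u j) := by
  ext k
  simp only [Finset.mem_filter, mem_box, Finset.mem_insert]
  constructor
  · intro h
    have hkj := h j
    rw [if_pos (Or.inl rfl)] at hkj
    refine ⟨fun i => ?_, by omega⟩
    have hi := h i
    by_cases hij : i = j
    · subst hij
      rw [if_neg hj]
      omega
    · by_cases hiA : i ∈ A
      · rw [if_pos (Or.inr hiA)] at hi
        rw [if_pos hiA]
        exact hi
      · rw [if_neg (by tauto)] at hi
        rw [if_neg hiA]
        exact hi
  · rintro ⟨h, hkj⟩ i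
    have hi := h i
    by_cases hij : i = j
    · subst hij
      rw [if_neg hj] at hi
      rw [if_pos (Or.inl rfl)]
      omega
    · by_cases hiA : i ∈ A
      · rw [if_pos hiA] at hi
        rw [if_pos (Or.inr hiA)]
        exact hi
      · rw [if_neg hiA] at hi
        rw [if_neg (by tauto)]
        exact hi

lemma box_update_eq {A : Finset (Fin r)} {j : Fin r} (hj : j ∉ A) {u : Fin r → ℕ} :
    box A (Function.update u j (u j - 1)) = (box A u).filter (fun k => ¬ k j = u j) := by
  ext k
  simp only [Finset.mem_filter, mem_box]
  constructor
  · intro h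
    have hkj := h j
    rw [if_neg hj, Function.update_self] at hkj
    refine ⟨fun i => ?_, by omega⟩
    have hi := h i
    by_cases hij : i = j
    · subst hij
      rw [if_neg hj, Function.update_self] at hi
      rw [if_neg hj]
      omega
    · rwa [Function.update_of_ne hij] at hi
  · rintro ⟨h, hkj⟩ i
    have hi := h i
    by_cases hij : i = j
    · subst hij
      rw [if_neg hj] at hi ⊢
      rw [Function.update_self]
      omega
    · rw [Function.update_of_ne hij]
      exact hi

lemma box_split {M : Type*} [AddCommMonoid M] {A : Finset (Fin r)} {j : Fin r} (hj : j ∉ A)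
    {u : Fin r → ℕ} (hu : 1 ≤ u j) (g : (Fin r → ℕ) → M) :
    ∑ k ∈ box A u, g k = (∑ k ∈ box A (Function.update u j (u j - 1)), g k)
      + ∑ k ∈ box (insert j A) u, g k := by
  classical
  rw [box_update_eq hj, box_insert_eq hj hu]
  rw [add_comm]
  exact (Finset.sum_filter_add_sum_filter_not (box A u) (fun k => k j = u j) g).symm

lemma box_eq_empty {A : Finset (Fin r)} {j : Fin r} (hj : j ∉ A) {u : Fin r → ℕ}
    (hu : u j = 0) : box A u = ∅ := by
  refine Finset.Icc_eq_empty ?_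
  rw [Pi.le_def]
  push_neg
  exact ⟨j, by rw [if_neg hj]; omega⟩

variable (Z : (Fin r → ℕ) → Ω → ℝ)

/-- The box partial sums. -/
def bsum (A : Finset (Fin r)) (u : Fin r → ℕ) : Ω → ℝ := fun ω => ∑ k ∈ box A u, Z k ω

lemma bsum_pi_sum (A : Finset (Fin r)) (u : Fin r → ℕ) :
    bsum Z A u = ∑ k ∈ box A u, Z k := by
  funext ω
  simp [bsum, Finset.sum_apply]

lemma bsum_empty (u : Fin r → ℕ) :
    bsum Z ∅ u = fun ω => ∑ k ∈ Finset.Icc 1 u, Z k ω := by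
  have h : box (∅ : Finset (Fin r)) u = Finset.Icc 1 u := by
    unfold box
    congr 1
  funext ω
  show (∑ k ∈ box (∅ : Finset (Fin r)) u, Z k ω) = _
  rw [h]

lemma int_bsum (hZint : ∀ n : Fin r → ℕ, (∀ i, 1 ≤ n i) → Integrable (Z n) μ)
    {A : Finset (Fin r)} {u : Fin r → ℕ} (hu : ∀ i ∈ A, 1 ≤ u i) :
    Integrable (bsum Z A u) μ :=
  integrable_finset_sum _ fun k hk => hZint k (one_le_of_mem_box hu hk)

lemma memLp_bsum {α : ℝ} (hα1 : 1 < α) (hZmeas : ∀ n, Measurable (Z n))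
    (hZα : ∀ n : Fin r → ℕ, (∀ i, 1 ≤ n i) → Integrable (fun ω => |Z n ω| ^ α) μ)
    {A : Finset (Fin r)} {u : Fin r → ℕ} (hu : ∀ i ∈ A, 1 ≤ u i) :
    MemLp (bsum Z A u) (ENNReal.ofReal α) μ := by
  rw [bsum_pi_sum]
  refine memLp_finset_sum' _ fun k hk => ?_
  exact (memLp_iff_int hα1 (hZmeas k).aestronglyMeasurable).mpr
    (hZα k (one_le_of_mem_box hu hk))

lemma int_abs_bsum {α : ℝ} (hα1 : 1 < α) (hZmeas : ∀ n, Measurable (Z n))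
    (hZα : ∀ n : Fin r → ℕ, (∀ i, 1 ≤ n i) → Integrable (fun ω => |Z n ω| ^ α) μ)
    {A : Finset (Fin r)} {u : Fin r → ℕ} (hu : ∀ i ∈ A, 1 ≤ u i) :
    Integrable (fun ω => |bsum Z A u ω| ^ α) μ :=
  (memLp_iff_int hα1 (memLp_bsum Z hα1 hZmeas hZα hu).1).mp (memLp_bsum Z hα1 hZmeas hZα hu)

lemma sigma_le (hZmeas : ∀ n, Measurable (Z n)) (m : Fin r → ℕ) :
    sigmaOfSums (fun j ω => ∑ k ∈ Finset.Icc 1 j, Z k ω) m ≤ m0 := by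
  refine iSup₂_le fun k _ => ?_
  exact Measurable.comap_le (Finset.measurable_sum _ fun k _ => hZmeas k)

lemma ceq (hZint : ∀ n : Fin r → ℕ, (∀ i, 1 ≤ n i) → Integrable (Z n) μ)
    (hmart : ∀ n m : Fin r → ℕ, (∀ i, 1 ≤ n i) → (∀ i, 1 ≤ m i) →
      μ[fun ω => ∑ k ∈ Finset.Icc 1 n, Z k ω |
          sigmaOfSums (fun j ω => ∑ k ∈ Finset.Icc 1 j, Z k ω) m]
        =ᵐ[μ] fun ω => ∑ k ∈ Finset.Icc 1 (n ⊓ m), Z k ω)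
    {q m : Fin r → ℕ} (hm : ∀ i, 1 ≤ m i) :
    μ[fun ω => ∑ k ∈ Finset.Icc 1 q, Z k ω |
        sigmaOfSums (fun j ω => ∑ k ∈ Finset.Icc 1 j, Z k ω) m]
      =ᵐ[μ] fun ω => ∑ k ∈ Finset.Icc 1 (q ⊓ m), Z k ω := by
  by_cases hq : ∀ i, 1 ≤ q i
  · exact hmart q m hq hm
  · push_neg at hq
    obtain ⟨i, hi⟩ := hq
    have h1 : Finset.Icc (1 : Fin r → ℕ) q = ∅ := by
      refine Finset.Icc_eq_empty fun hle => ?_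
      have := hle i
      simp only [Pi.one_apply] at this
      omega
    have h2 : Finset.Icc (1 : Fin r → ℕ) (q ⊓ m) = ∅ := by
      refine Finset.Icc_eq_empty fun hle => ?_
      have h3 := hle i
      have h4 : (q ⊓ m) i = min (q i) (m i) := rfl
      simp only [Pi.one_apply, h4] at h3
      omega
    rw [h1, h2]
    have hz : (fun ω : Ω => ∑ k ∈ (∅ : Finset (Fin r → ℕ)), Z k ω) = (0 : Ω → ℝ) := by
      funext ω; simp
    rw [hz, condExp_zero]

lemma cebox (hZint : ∀ n : Fin r → ℕ, (∀ i, 1 ≤ n i) → Integrable (Z n) μ)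
    (hmart : ∀ n m : Fin r → ℕ, (∀ i, 1 ≤ n i) → (∀ i, 1 ≤ m i) →
      μ[fun ω => ∑ k ∈ Finset.Icc 1 n, Z k ω |
          sigmaOfSums (fun j ω => ∑ k ∈ Finset.Icc 1 j, Z k ω) m]
        =ᵐ[μ] fun ω => ∑ k ∈ Finset.Icc 1 (n ⊓ m), Z k ω) :
    ∀ (A : Finset (Fin r)) (u m : Fin r → ℕ), (∀ i ∈ A, 1 ≤ u i) → (∀ i, 1 ≤ m i) →
      μ[bsum Z A u | sigmaOfSums (fun j ω => ∑ k ∈ Finset.Icc 1 j, Z k ω) m]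
        =ᵐ[μ] if ∀ i ∈ A, u i ≤ m i then bsum Z A (u ⊓ m) else 0 := by
  classical
  intro A
  induction A using Finset.induction_on with
  | empty =>
    intro u m hu hm
    rw [if_pos (by simp)]
    rw [bsum_empty, bsum_empty]
    exact ceq Z hZint hmart hm
  | @insert j A hj ih =>
    intro u m hu hm
    have huj : 1 ≤ u j := hu j (Finset.mem_insert_self j A)
    have huA : ∀ i ∈ A, 1 ≤ u i := fun i hiA => hu i (Finset.mem_insert_of_mem hiA)
    set u' := Function.update u j (u j - 1) with hu'
    have hu'j : u' j = u j - 1 := by rw [hu', Function.update_self]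
    have hu'ne : ∀ i, i ≠ j → u' i = u i := fun i hij => by
      rw [hu', Function.update_of_ne hij]
    have huA' : ∀ i ∈ A, 1 ≤ u' i := by
      intro i hiA
      rw [hu'ne i (ne_of_mem_of_not_mem hiA hj)]
      exact huA i hiA
    have hrepr : bsum Z (insert j A) u = bsum Z A u - bsum Z A u' := by
      funext ω
      have h := box_split hj huj (fun k => Z k ω)
      rw [← hu'] at h
      simp only [bsum, Pi.sub_apply]
      linarith
    have hint1 : Integrable (bsum Z A u) μ := int_bsum Z hZint huA
    have hint2 : Integrable (bsum Z A u') μ := int_bsum Z hZint huA'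
    have hsub := condExp_sub
      (m := sigmaOfSums (fun j ω => ∑ k ∈ Finset.Icc 1 j, Z k ω) m) hint1 hint2
    have ih1 := ih u m huA hm
    have ih2 := ih u' m huA' hm
    rw [hrepr]
    by_cases hP : ∀ i ∈ A, u i ≤ m i
    · have hP' : ∀ i ∈ A, u' i ≤ m i := by
        intro i hiA
        rw [hu'ne i (ne_of_mem_of_not_mem hiA hj)]
        exact hP i hiA
      rw [if_pos hP] at ih1
      rw [if_pos hP'] at ih2
      by_cases hjm : u j ≤ m j
      · rw [if_pos (by
          intro i hi
          rcases Finset.mem_insert.mp hi with rfl | hiA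
          exacts [hjm, hP i hiA])]
        have hkey : bsum Z (insert j A) (u ⊓ m) = bsum Z A (u ⊓ m) - bsum Z A (u' ⊓ m) := by
          have e1 : (u ⊓ m) j = min (u j) (m j) := rfl
          have h1 : (1:ℕ) ≤ (u ⊓ m) j := by omega
          funext ω
          have h := box_split hj h1 (fun k => Z k ω)
          have hupd : Function.update (u ⊓ m) j ((u ⊓ m) j - 1) = u' ⊓ m := by
            funext i
            rcases eq_or_ne i j with rfl | hij
            · have e2 : (u' ⊓ m) i = min (u' i) (m i) := rfl
              rw [Function.update_self, e1, e2, hu'j]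
              omega
            · rw [Function.update_of_ne hij]
              have e2 : (u' ⊓ m) i = min (u' i) (m i) := rfl
              have e3 : (u ⊓ m) i = min (u i) (m i) := rfl
              rw [e2, e3, hu'ne i hij]
          rw [hupd] at h
          simp only [bsum, Pi.sub_apply]
          linarith
        rw [hkey]
        refine hsub.trans ?_
        filter_upwards [ih1, ih2] with ω e1 e2
        simp only [Pi.sub_apply]
        rw [e1, e2]
      · rw [if_neg (by
          push_neg
          exact ⟨j, Finset.mem_insert_self j A, by omega⟩)]
        have hmm' : u ⊓ m = u' ⊓ m := by
          funext i
          rcases eq_or_ne i j with rfl | hij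
          · show min (u i) (m i) = min (u' i) (m i)
            rw [hu'j]
            omega
          · show min (u i) (m i) = min (u' i) (m i)
            rw [hu'ne i hij]
        refine hsub.trans ?_
        filter_upwards [ih1, ih2] with ω e1 e2
        simp only [Pi.sub_apply, Pi.zero_apply]
        rw [e1, e2, hmm']
        ring
    · rw [if_neg hP] at ih1
      have hP'2 : ¬ ∀ i ∈ A, u' i ≤ m i := by
        intro hC
        apply hP
        intro i hiA
        have h := hC i hiA
        rwa [hu'ne i (ne_of_mem_of_not_mem hiA hj)] at h
      rw [if_neg hP'2] at ih2
      rw [if_neg (by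
        intro hC
        exact hP fun i hiA => hC i (Finset.mem_insert_of_mem hiA))]
      refine hsub.trans ?_
      filter_upwards [ih1, ih2] with ω e1 e2
      simp only [Pi.sub_apply, Pi.zero_apply]
      rw [e1, e2]
      ring

lemma box_none (u : Fin r → ℕ) : box (∅ : Finset (Fin r)) u = Finset.Icc 1 u := by
  unfold box
  congr 1

lemma main_bound {α : ℝ} (hα1 : 1 < α) (hα2 : α ≤ 2)
    (hZmeas : ∀ n, Measurable (Z n))
    (hZint : ∀ n : Fin r → ℕ, (∀ i, 1 ≤ n i) → Integrable (Z n) μ)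
    (hZα : ∀ n : Fin r → ℕ, (∀ i, 1 ≤ n i) → Integrable (fun ω => |Z n ω| ^ α) μ)
    (hmart : ∀ n m : Fin r → ℕ, (∀ i, 1 ≤ n i) → (∀ i, 1 ≤ m i) →
      μ[fun ω => ∑ k ∈ Finset.Icc 1 n, Z k ω |
          sigmaOfSums (fun j ω => ∑ k ∈ Finset.Icc 1 j, Z k ω) m]
        =ᵐ[μ] fun ω => ∑ k ∈ Finset.Icc 1 (n ⊓ m), Z k ω) :
    ∀ (C : Finset (Fin r)) (n : Fin r → ℕ), (∀ i, 1 ≤ n i) →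
      ∫ ω, |bsum Z Cᶜ n ω| ^ α ∂μ ≤ 2 ^ C.card * ∑ k ∈ box Cᶜ n, ∫ ω, |Z k ω| ^ α ∂μ := by
  classical
  intro C
  induction C using Finset.induction_on with
  | empty =>
    intro n hn
    have hbox : box ((∅ : Finset (Fin r))ᶜ) n = {n} := by
      rw [Finset.compl_empty]
      unfold box
      have h : (fun i => if i ∈ (Finset.univ : Finset (Fin r)) then n i else 1) = n := by
        funext i; simp
      rw [h, Finset.Icc_self]
    have hb : bsum Z ((∅ : Finset (Fin r))ᶜ) n = Z n := by
      funext ω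
      simp only [bsum, hbox, Finset.sum_singleton]
    simp only [hb, hbox, Finset.sum_singleton, Finset.card_empty, pow_zero, one_mul, le_refl]
  | @insert i C hiC ih =>
    intro n hn
    have hiCc : i ∈ Cᶜ := Finset.mem_compl.mpr hiC
    set A' := (insert i C)ᶜ with hA'
    have hA'e : A' = Cᶜ.erase i := by rw [hA', Finset.compl_insert]
    have hiA' : i ∉ A' := by rw [hA'e]; exact Finset.notMem_erase i _
    have hins : insert i A' = Cᶜ := by rw [hA'e]; exact Finset.insert_erase hiCc
    -- slice decomposition
    have hslice : ∀ (g : (Fin r → ℕ) → ℝ) (t : ℕ),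
        ∑ k ∈ box A' (Function.update n i t), g k
          = ∑ s ∈ Finset.Icc 1 t, ∑ k ∈ box Cᶜ (Function.update n i s), g k := by
      intro g t
      induction t with
      | zero =>
        rw [box_eq_empty hiA' (Function.update_self i 0 n)]
        simp
      | succ t iht =>
        have h := box_split (u := Function.update n i (t+1)) hiA'
          (by rw [Function.update_self]; omega) g
        have hupd : Function.update (Function.update n i (t+1)) i
            ((Function.update n i (t+1)) i - 1) = Function.update n i t := by
          rw [Function.update_self, Function.update_idem]
          norm_num
        rw [hupd, hins] at h
        rw [h, iht, Finset.sum_Icc_succ_top (by omega : 1 ≤ t+1)]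
    -- one-dimensional von Bahr-Esseen iteration
    have claim : ∀ t : ℕ, 1 ≤ t → t ≤ n i →
        ∫ ω, |bsum Z A' (Function.update n i t) ω| ^ α ∂μ
          ≤ 2 * ∑ s ∈ Finset.Icc 1 t,
              ∫ ω, |bsum Z Cᶜ (Function.update n i s) ω| ^ α ∂μ := by
      intro t ht
      induction t, ht using Nat.le_induction with
      | base =>
        intro _
        have hb : box A' (Function.update n i 1) = box Cᶜ (Function.update n i 1) := by
          rw [← hins]
          unfold box
          congr 1
          funext i'
          rcases eq_or_ne i' i with rfl | hne
          · simp [Function.update_self]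
          · simp [Finset.mem_insert, hne]
        have he : bsum Z A' (Function.update n i 1) = bsum Z Cᶜ (Function.update n i 1) := by
          funext ω
          simp only [bsum, hb]
        rw [he, Finset.Icc_self, Finset.sum_singleton]
        have hnn : 0 ≤ ∫ ω, |bsum Z Cᶜ (Function.update n i 1) ω| ^ α ∂μ :=
          integral_nonneg fun ω => Real.rpow_nonneg (abs_nonneg _) α
        linarith
      | succ t ht iht =>
        intro hle
        have iht' := iht (by omega)
        set m := Function.update n i t with hmdef
        have hm1 : ∀ i', 1 ≤ m i' := by
          intro i'
          rcases eq_or_ne i' i with rfl | hne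
          · rw [hmdef, Function.update_self]; omega
          · rw [hmdef, Function.update_of_ne hne]; exact hn i'
        set u := Function.update n i (t+1) with hudef
        have hu1 : ∀ i', 1 ≤ u i' := by
          intro i'
          rcases eq_or_ne i' i with rfl | hne
          · rw [hudef, Function.update_self]; omega
          · rw [hudef, Function.update_of_ne hne]; exact hn i'
        have hXY : bsum Z A' u = bsum Z A' m + bsum Z Cᶜ u := by
          funext ω
          have h := box_split (u := u) hiA'
            (by rw [hudef, Function.update_self]; omega) (fun k => Z k ω)
          have hupd : Function.update u i (u i - 1) = m := by
            rw [hudef, hmdef, Function.update_self, Function.update_idem]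
            norm_num
          rw [hupd, hins] at h
          simp only [bsum, Pi.add_apply]
          linarith
        have hG := sigma_le Z hZmeas m
        have hXm : MemLp (bsum Z A' m) (ENNReal.ofReal α) μ :=
          memLp_bsum Z hα1 hZmeas hZα (fun i' _ => hm1 i')
        have hYm : MemLp (bsum Z Cᶜ u) (ENNReal.ofReal α) μ :=
          memLp_bsum Z hα1 hZmeas hZα (fun i' _ => hu1 i')
        have hX : μ[bsum Z A' m|sigmaOfSums (fun j ω => ∑ k ∈ Finset.Icc 1 j, Z k ω) m]
            =ᵐ[μ] bsum Z A' m := by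
          have h := cebox Z hZint hmart A' m m (fun i' _ => hm1 i') hm1
          rw [if_pos (fun i' _ => le_refl _), inf_idem] at h
          exact h
        have hY : μ[bsum Z Cᶜ u|sigmaOfSums (fun j ω => ∑ k ∈ Finset.Icc 1 j, Z k ω) m]
            =ᵐ[μ] 0 := by
          have h := cebox Z hZint hmart Cᶜ u m (fun i' _ => hu1 i') hm1
          rw [if_neg (by
            push_neg
            refine ⟨i, hiCc, ?_⟩
            rw [hudef, hmdef, Function.update_self, Function.update_self]
            omega)] at h
          exact h
        have hstep := vbe_step hα1 hα2 hG hXm hYm hX hY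
        calc ∫ ω, |bsum Z A' u ω| ^ α ∂μ
            = ∫ ω, |bsum Z A' m ω + bsum Z Cᶜ u ω| ^ α ∂μ := by
              simp only [hXY, Pi.add_apply]
          _ ≤ ∫ ω, |bsum Z A' m ω| ^ α ∂μ + 2 * ∫ ω, |bsum Z Cᶜ u ω| ^ α ∂μ := hstep
          _ ≤ 2 * ∑ s ∈ Finset.Icc 1 t,
                (∫ ω, |bsum Z Cᶜ (Function.update n i s) ω| ^ α ∂μ)
              + 2 * ∫ ω, |bsum Z Cᶜ u ω| ^ α ∂μ := by
              rw [hmdef] at iht'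
              linarith
          _ = 2 * ∑ s ∈ Finset.Icc 1 (t+1),
                ∫ ω, |bsum Z Cᶜ (Function.update n i s) ω| ^ α ∂μ := by
              rw [Finset.sum_Icc_succ_top (by omega : 1 ≤ t+1), hudef]
              ring
    -- conclude the insert step
    have hfin := claim (n i) (hn i) le_rfl
    rw [Function.update_eq_self i n] at hfin
    have hslice_bound : ∀ s ∈ Finset.Icc 1 (n i),
        ∫ ω, |bsum Z Cᶜ (Function.update n i s) ω| ^ α ∂μ
          ≤ 2 ^ C.card * ∑ k ∈ box Cᶜ (Function.update n i s), ∫ ω, |Z k ω| ^ α ∂μ := by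
      intro s hs
      have hs1 : 1 ≤ s := (Finset.mem_Icc.mp hs).1
      refine ih (Function.update n i s) ?_
      intro i'
      rcases eq_or_ne i' i with rfl | hne
      · rw [Function.update_self]; omega
      · rw [Function.update_of_ne hne]; exact hn i'
    have hsum_le := Finset.sum_le_sum hslice_bound
    have hdecomp := hslice (fun k => ∫ ω, |Z k ω| ^ α ∂μ) (n i)
    rw [Function.update_eq_self i n] at hdecomp
    calc ∫ ω, |bsum Z A' n ω| ^ α ∂μ
        ≤ 2 * ∑ s ∈ Finset.Icc 1 (n i),
            ∫ ω, |bsum Z Cᶜ (Function.update n i s) ω| ^ α ∂μ := hfin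
      _ ≤ 2 * ∑ s ∈ Finset.Icc 1 (n i),
            (2 ^ C.card * ∑ k ∈ box Cᶜ (Function.update n i s), ∫ ω, |Z k ω| ^ α ∂μ) := by
          linarith
      _ = 2 ^ (insert i C).card * ∑ k ∈ box A' n, ∫ ω, |Z k ω| ^ α ∂μ := by
          rw [← Finset.mul_sum, Finset.card_insert_of_notMem hiC, pow_succ, hdecomp]
          ring

end Main


end VBE

/-- **Iterated von Bahr–Esseen inequality for multiparameter martingales.**
Let `α ∈ (1,2]` and let `{Z_n : n ∈ ℕ^r}` be a random field with `E|Z_n|^α < ∞` whose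
rectangular partial sums `S_n = Σ_{k≤n} Z_k` form a multiparameter martingale, i.e.
`E[S_n | σ(S_k : k ≤ m)] = S_{n∧m}` a.s. for all `n, m`.  Then for every `N ∈ ℕ^r`,
`E|S_N|^α ≤ 2^r Σ_{k≤N} E|Z_k|^α`. -/
theorem von_bahr_esseen_multiparameter
    {r : ℕ} (hr : 1 ≤ r) (α : ℝ) (hα1 : 1 < α) (hα2 : α ≤ 2)
    {Ω : Type*} [MeasurableSpace Ω] {μ : Measure Ω} [IsProbabilityMeasure μ]
    (Z : (Fin r → ℕ) → Ω → ℝ)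
    (hZmeas : ∀ n, Measurable (Z n))
    (hZint : ∀ n : Fin r → ℕ, (∀ i, 1 ≤ n i) → Integrable (Z n) μ)
    (hZα : ∀ n : Fin r → ℕ, (∀ i, 1 ≤ n i) → Integrable (fun ω => |Z n ω| ^ α) μ)
    (hmart : ∀ n m : Fin r → ℕ, (∀ i, 1 ≤ n i) → (∀ i, 1 ≤ m i) →
      μ[fun ω => ∑ k ∈ Finset.Icc 1 n, Z k ω |
          sigmaOfSums (fun j ω => ∑ k ∈ Finset.Icc 1 j, Z k ω) m]
        =ᵐ[μ] fun ω => ∑ k ∈ Finset.Icc 1 (n ⊓ m), Z k ω)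
    (N : Fin r → ℕ) (hN : ∀ i, 1 ≤ N i) :
    ∫ ω, |∑ k ∈ Finset.Icc 1 N, Z k ω| ^ α ∂μ ≤
      2 ^ r * ∑ k ∈ Finset.Icc (1 : Fin r → ℕ) N, ∫ ω, |Z k ω| ^ α ∂μ := by
  classical
  have h := VBE.main_bound Z hα1 hα2 hZmeas hZint hZα hmart Finset.univ N hN
  rw [Finset.compl_univ] at h
  simp only [VBE.bsum_empty] at h
  rw [VBE.box_none, Finset.card_univ, Fintype.card_fin] at h
  exact h
end

section
/- (Kronecker lemma for multiple sums, min-convergence.) Let r ≥ 1 be an integer, {x_n : n ∈ ℕ^r} nonnegative real numbers, and b = {b_n : n ∈ ℕ^r} a monotonic array of positive reals with b_n → ∞ as n → ∞ (i.e., as min(n_1,…,n_r) → ∞). If the multiple series Σ_{n∈ℕ^r} x_n/b_n converges (i.e., its rectangular partial sums Σ_{k≤n} x_k/b_k have a finite limit as min(n_1,…,n_r) → ∞), then (1/b_n) Σ_{k≤n} x_k → 0 as n → ∞ (i.e., as min(n_1,…,n_r) → ∞). -/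
open Filter Finset

/-- **Kronecker lemma for multiple sums (min-convergence).**
Let `{x_n : n ∈ ℕ^r}` be nonnegative reals and `b` a monotonic array of positive reals
with `b_n → ∞` as `n → ∞` (i.e. as `min(n₁,…,n_r) → ∞`).  If the rectangular partial
sums of `Σ_n x_n/b_n` converge as `min(n₁,…,n_r) → ∞`, then
`(1/b_n) Σ_{k≤n} x_k → 0` as `min(n₁,…,n_r) → ∞`. -/
theorem kronecker_multiple_min
    {r : ℕ} (hr : 1 ≤ r)
    (x : (Fin r → ℕ) → ℝ)
    (hx : ∀ n : Fin r → ℕ, (∀ i, 1 ≤ n i) → 0 ≤ x n)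
    (b : (Fin r → ℕ) → ℝ)
    (hbpos : ∀ n : Fin r → ℕ, (∀ i, 1 ≤ n i) → 0 < b n)
    (hbmono : ∀ k n : Fin r → ℕ, (∀ i, 1 ≤ k i) → k ≤ n → b k ≤ b n)
    (hbinf : Filter.Tendsto b Filter.atTop Filter.atTop)
    (hconv : ∃ L : ℝ, Filter.Tendsto
      (fun n : Fin r → ℕ => ∑ k ∈ Finset.Icc 1 n, x k / b k)
      Filter.atTop (nhds L)) :
    Filter.Tendsto (fun n : Fin r → ℕ => (∑ k ∈ Finset.Icc 1 n, x k) / b n)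
      Filter.atTop (nhds 0) := by
  obtain ⟨L, hL⟩ := hconv
  set S : (Fin r → ℕ) → ℝ := fun n => ∑ k ∈ Finset.Icc 1 n, x k / b k with hSdef
  have hterm : ∀ k : Fin r → ℕ, (∀ i, 1 ≤ k i) → 0 ≤ x k / b k := fun k hk =>
    div_nonneg (hx k hk) (hbpos k hk).le
  have hSmono : ∀ a c : Fin r → ℕ, a ≤ c → S a ≤ S c := by
    intro a c hac
    refine Finset.sum_le_sum_of_subset_of_nonneg (Finset.Icc_subset_Icc_right hac) ?_
    intro k hk _
    exact hterm k fun i => (Finset.mem_Icc.1 hk).1 i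
  have hSle : ∀ n, S n ≤ L := by
    intro n
    refine ge_of_tendsto hL ?_
    filter_upwards [eventually_ge_atTop n] with m hm using hSmono n m hm
  rw [Metric.tendsto_nhds]
  intro ε hε
  have h1 : ∀ᶠ n in atTop, L - ε / 2 < S n :=
    hL.eventually (eventually_gt_nhds (by linarith))
  obtain ⟨N₀, hN₀⟩ := h1.exists
  set N : Fin r → ℕ := N₀ ⊔ 1 with hNdef
  have hN1 : ∀ i, 1 ≤ N i := fun i => le_sup_right.trans (le_refl (N i))
  have hSN : L - ε / 2 < S N := lt_of_lt_of_le hN₀ (hSmono N₀ N le_sup_left)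
  set C : ℝ := ∑ k ∈ Finset.Icc 1 N, x k with hCdef
  filter_upwards [eventually_ge_atTop N,
    hbinf.eventually_gt_atTop (max (2 * C / ε) 0)] with n hn hbn
  have hb0 : 0 < b n := lt_of_le_of_lt (le_max_right _ _) hbn
  have h2C : 2 * C < b n * ε := (div_lt_iff₀ hε).1 (lt_of_le_of_lt (le_max_left _ _) hbn)
  have hsub : Finset.Icc 1 N ⊆ Finset.Icc 1 n := Finset.Icc_subset_Icc_right hn
  -- bound the tail
  have htail : ∑ k ∈ Finset.Icc 1 n \ Finset.Icc 1 N, x k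
      ≤ b n * ∑ k ∈ Finset.Icc 1 n \ Finset.Icc 1 N, x k / b k := by
    rw [Finset.mul_sum]
    refine Finset.sum_le_sum ?_
    intro k hk
    have hk' := Finset.mem_Icc.1 (Finset.mem_sdiff.1 hk).1
    have hk1 : ∀ i, 1 ≤ k i := fun i => hk'.1 i
    calc x k = x k / b k * b k := (div_mul_cancel₀ _ (ne_of_gt (hbpos k hk1))).symm
      _ ≤ x k / b k * b n := mul_le_mul_of_nonneg_left (hbmono k n hk1 hk'.2) (hterm k hk1)
      _ = b n * (x k / b k) := mul_comm _ _
  have htail2 : ∑ k ∈ Finset.Icc 1 n \ Finset.Icc 1 N, x k / b k = S n - S N := by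
    rw [hSdef]
    exact Finset.sum_sdiff_eq_sub hsub
  have hsplit : ∑ k ∈ Finset.Icc 1 n, x k
      = C + ∑ k ∈ Finset.Icc 1 n \ Finset.Icc 1 N, x k := by
    rw [hCdef, add_comm]
    exact (Finset.sum_sdiff hsub).symm
  have hSnL : S n ≤ L := hSle n
  have hsum_nonneg : 0 ≤ ∑ k ∈ Finset.Icc 1 n, x k := by
    refine Finset.sum_nonneg ?_
    intro k hk
    exact hx k fun i => (Finset.mem_Icc.1 hk).1 i
  have hmain : ∑ k ∈ Finset.Icc 1 n, x k < ε * b n := by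
    have h1 : ∑ k ∈ Finset.Icc 1 n \ Finset.Icc 1 N, x k ≤ b n * (S n - S N) := by
      rw [← htail2]; exact htail
    have h2 : S n - S N < ε / 2 := by linarith
    nlinarith [hb0]
  rw [Real.dist_eq, sub_zero, abs_of_nonneg (div_nonneg hsum_nonneg hb0.le)]
  rw [div_lt_iff₀ hb0]; linarith
end

section
/- (Kronecker lemma for multiple sums, max-convergence.) Let r ≥ 1 be an integer, {x_n : n ∈ ℕ^r} nonnegative real numbers, and b = {b_n : n ∈ ℕ^r} a monotonic array of positive reals with b_n → ∞ as |n| → ∞ (i.e., for every M > 0 there exists N such that b_n ≥ M whenever |n| = n_1⋯n_r ≥ N). If the multiple series Σ_{n∈ℕ^r} x_n/b_n converges (i.e., its rectangular partial sums Σ_{k≤n} x_k/b_k have a finite limit as min(n_1,…,n_r) → ∞; since the terms are nonnegative, equivalently the unordered sum is finite), then (1/b_n) Σ_{k≤n} x_k → 0 as |n| → ∞ (convergence along the net of multi-indices directed by |n| → ∞). -/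
open Filter Finset

/-- The filter on multi-indices `n ∈ ℕ^r` corresponding to `|n| = n₁⋯n_r → ∞`
(max-convergence). -/
def maxFilter (r : ℕ) : Filter (Fin r → ℕ) :=
  Filter.atTop.comap (fun n => ∏ i, n i)

/-- **Kronecker lemma for multiple sums (max-convergence).**
Let `{x_n : n ∈ ℕ^r}` be nonnegative reals and `b` a monotonic array of positive reals
with `b_n → ∞` as `|n| = n₁⋯n_r → ∞`.  If the rectangular partial sums of
`Σ_n x_n/b_n` converge as `min(n₁,…,n_r) → ∞`, then `(1/b_n) Σ_{k≤n} x_k → 0` as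
`|n| → ∞`. -/
theorem kronecker_multiple_max
    {r : ℕ} (hr : 1 ≤ r)
    (x : (Fin r → ℕ) → ℝ)
    (hx : ∀ n : Fin r → ℕ, (∀ i, 1 ≤ n i) → 0 ≤ x n)
    (b : (Fin r → ℕ) → ℝ)
    (hbpos : ∀ n : Fin r → ℕ, (∀ i, 1 ≤ n i) → 0 < b n)
    (hbmono : ∀ k n : Fin r → ℕ, (∀ i, 1 ≤ k i) → k ≤ n → b k ≤ b n)
    (hbinf : Filter.Tendsto b (maxFilter r) Filter.atTop)
    (hconv : ∃ L : ℝ, Filter.Tendsto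
      (fun n : Fin r → ℕ => ∑ k ∈ Finset.Icc 1 n, x k / b k)
      Filter.atTop (nhds L)) :
    Filter.Tendsto (fun n : Fin r → ℕ => (∑ k ∈ Finset.Icc 1 n, x k) / b n)
      (maxFilter r) (nhds 0) := by
  obtain ⟨L, hL⟩ := hconv
  set S : (Fin r → ℕ) → ℝ := fun n => ∑ k ∈ Finset.Icc 1 n, x k / b k with hSdef
  have hone : ∀ (n k : Fin r → ℕ), k ∈ Finset.Icc 1 n → ∀ i, 1 ≤ k i := by
    intro n k hk i
    exact (Finset.mem_Icc.1 hk).1 i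
  have hterm : ∀ (n : Fin r → ℕ), ∀ k ∈ Finset.Icc 1 n, 0 ≤ x k / b k := by
    intro n k hk
    exact div_nonneg (hx k (hone n k hk)) (hbpos k (hone n k hk)).le
  have hSmono : Monotone S := by
    intro a c hac
    exact Finset.sum_le_sum_of_subset_of_nonneg (Finset.Icc_subset_Icc le_rfl hac)
      (fun k hk _ => hterm c k hk)
  have hSle : ∀ n, S n ≤ L := hSmono.ge_of_tendsto hL
  rw [NormedAddCommGroup.tendsto_nhds_zero]
  intro ε hε
  obtain ⟨m, hm⟩ : ∃ m, L - ε / 2 < S m :=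
    (hL.eventually (eventually_gt_nhds (by linarith))).exists
  set C := ∑ k ∈ Finset.Icc 1 m, x k with hCdef
  have hC : 0 ≤ C := Finset.sum_nonneg fun k hk => hx k (hone m k hk)
  have hprod : Filter.Tendsto (fun n : Fin r → ℕ => ∏ i, n i) (maxFilter r) Filter.atTop :=
    tendsto_comap
  have h1 : ∀ᶠ n : Fin r → ℕ in maxFilter r, ∀ i, 1 ≤ n i := by
    filter_upwards [hprod.eventually_ge_atTop 1] with n hn i
    by_contra h
    push_neg at h
    have hni : n i = 0 := by omega
    have : ∏ j, n j = 0 := Finset.prod_eq_zero (Finset.mem_univ i) hni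
    omega
  have h2 : ∀ᶠ n : Fin r → ℕ in maxFilter r, 2 * (C + 1) / ε ≤ b n :=
    hbinf.eventually_ge_atTop _
  filter_upwards [h1, h2] with n hn1 hn2
  have hbn : 0 < b n := hbpos n hn1
  -- main bound : ∑_{k ≤ n} x k ≤ C + b n * (ε/2)
  have hsplit := Finset.sum_inter_add_sum_sdiff (Finset.Icc 1 n) (Finset.Icc 1 m) x
  have part1 : ∑ k ∈ Finset.Icc 1 n ∩ Finset.Icc 1 m, x k ≤ C :=
    Finset.sum_le_sum_of_subset_of_nonneg Finset.inter_subset_right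
      (fun k hk _ => hx k (hone m k hk))
  have part2 : ∑ k ∈ Finset.Icc 1 n \ Finset.Icc 1 m, x k
      ≤ b n * ∑ k ∈ Finset.Icc 1 n \ Finset.Icc 1 m, x k / b k := by
    rw [Finset.mul_sum]
    apply Finset.sum_le_sum
    intro k hk
    have hk' : k ∈ Finset.Icc 1 n := (Finset.mem_sdiff.1 hk).1
    have hk1 : ∀ i, 1 ≤ k i := hone n k hk'
    have hkn : k ≤ n := (Finset.mem_Icc.1 hk').2
    have hbk : 0 < b k := hbpos k hk1
    have hble : b k ≤ b n := hbmono k n hk1 hkn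
    calc x k = b k * (x k / b k) := by field_simp
      _ ≤ b n * (x k / b k) := mul_le_mul_of_nonneg_right hble (hterm n k hk')
  have part3 : ∑ k ∈ Finset.Icc 1 n \ Finset.Icc 1 m, x k / b k ≤ ε / 2 := by
    have hsub : Finset.Icc 1 n \ Finset.Icc 1 m ⊆ Finset.Icc 1 (n ⊔ m) \ Finset.Icc 1 m :=
      Finset.sdiff_subset_sdiff (Finset.Icc_subset_Icc le_rfl le_sup_left) subset_rfl
    have h4 : ∑ k ∈ Finset.Icc 1 n \ Finset.Icc 1 m, x k / b k
        ≤ ∑ k ∈ Finset.Icc 1 (n ⊔ m) \ Finset.Icc 1 m, x k / b k :=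
      Finset.sum_le_sum_of_subset_of_nonneg hsub
        (fun k hk _ => hterm (n ⊔ m) k (Finset.mem_sdiff.1 hk).1)
    have h5 : ∑ k ∈ Finset.Icc 1 (n ⊔ m) \ Finset.Icc 1 m, x k / b k = S (n ⊔ m) - S m :=
      Finset.sum_sdiff_eq_sub (Finset.Icc_subset_Icc le_rfl le_sup_right)
    have := hSle (n ⊔ m)
    linarith
  have key : ∑ k ∈ Finset.Icc 1 n, x k ≤ C + b n * (ε / 2) := by
    have := mul_le_mul_of_nonneg_left part3 hbn.le
    linarith
  have hTnn : 0 ≤ ∑ k ∈ Finset.Icc 1 n, x k :=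
    Finset.sum_nonneg fun k hk => hx k (hone n k hk)
  rw [Real.norm_eq_abs, abs_of_nonneg (div_nonneg hTnn hbn.le), div_lt_iff₀ hbn]
  have hbne : 2 * (C + 1) ≤ b n * ε := by
    rwa [div_le_iff₀ hε] at hn2
  nlinarith
end

section
/- (Failure of the Kronecker lemma for multiple sums without nonnegativity.) Let r = 2 and define b_{(n_1,n_2)} = n_1 n_2 for (n_1,n_2) ∈ ℕ², and x_{(k_1,k_2)} = −k_2 if k_1 = 1, x_{(k_1,k_2)} = 2k_2 if k_1 = 2, and x_{(k_1,k_2)} = 0 if k_1 > 2. Then: (i) for all n_1 ≥ 2 and n_2 ≥ 1, Σ_{k_1=1}^{n_1} Σ_{k_2=1}^{n_2} x_{(k_1,k_2)}/b_{(k_1,k_2)} = 0, so the double series Σ x_{(k_1,k_2)}/b_{(k_1,k_2)} converges to 0 (its rectangular partial sums are eventually constant equal to 0); (ii) for all n_1 ≥ 2 and n_2 ≥ 1, (1/b_{(n_1,n_2)}) Σ_{k_1=1}^{n_1} Σ_{k_2=1}^{n_2} x_{(k_1,k_2)} = (n_2+1)/(2n_1); and consequently (iii) the normalized partial sums (1/b_n)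 Σ_{k≤n} x_k do not converge as n → ∞ (i.e., along the net directed by min(n_1,n_2) → ∞). -/
open Filter Finset

lemma gauss_icc (n : ℕ) : ∑ k ∈ Finset.Icc 1 n, (k : ℝ) = n * (n + 1) / 2 := by
  induction n with
  | zero => simp
  | succ m ih =>
    rw [Finset.sum_Icc_succ_top (by omega), ih]
    push_cast; ring

lemma sum_two {f : ℕ → ℝ} {n : ℕ} (hn : 2 ≤ n)
    (h0 : ∀ k, 3 ≤ k → f k = 0) :
    ∑ k ∈ Finset.Icc 1 n, f k = f 1 + f 2 := by
  have hsub : ({1, 2} : Finset ℕ) ⊆ Finset.Icc 1 n := by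
    intro k hk
    simp only [Finset.mem_insert, Finset.mem_singleton] at hk
    rcases hk with rfl | rfl <;> simp [Finset.mem_Icc] <;> omega
  rw [← Finset.sum_subset hsub]
  · simp
  · intro k hk hk2
    simp only [Finset.mem_insert, Finset.mem_singleton, not_or] at hk2
    have hk' := Finset.mem_Icc.mp hk
    exact h0 k (by omega)

/-- **Failure of the Kronecker lemma for multiple sums without nonnegativity.**
For `r = 2`, `b_{(n₁,n₂)} = n₁n₂` and `x_{(k₁,k₂)} = −k₂` if `k₁ = 1`, `2k₂` if
`k₁ = 2`, `0` if `k₁ > 2`:  (i) all rectangular partial sums of `Σ x/b` with `n₁ ≥ 2`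
vanish, so the double series converges to `0`;  (ii) the normalized partial sums equal
`(n₂+1)/(2n₁)` for `n₁ ≥ 2`;  (iii) consequently they do not converge along the net
directed by `min(n₁,n₂) → ∞`. -/
theorem kronecker_counterexample
    (b : ℕ × ℕ → ℝ) (hb : ∀ n : ℕ × ℕ, b n = (n.1 : ℝ) * n.2)
    (x : ℕ × ℕ → ℝ)
    (hx : ∀ k : ℕ × ℕ, x k =
      if k.1 = 1 then -(k.2 : ℝ) else if k.1 = 2 then 2 * (k.2 : ℝ) else 0) :
    (∀ n₁ n₂ : ℕ, 2 ≤ n₁ → 1 ≤ n₂ →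
      ∑ k₁ ∈ Finset.Icc 1 n₁, ∑ k₂ ∈ Finset.Icc 1 n₂, x (k₁, k₂) / b (k₁, k₂) = 0) ∧
    (∀ n₁ n₂ : ℕ, 2 ≤ n₁ → 1 ≤ n₂ →
      (∑ k₁ ∈ Finset.Icc 1 n₁, ∑ k₂ ∈ Finset.Icc 1 n₂, x (k₁, k₂)) / b (n₁, n₂) =
        ((n₂ : ℝ) + 1) / (2 * n₁)) ∧
    ¬ ∃ L : ℝ, Filter.Tendsto
      (fun n : ℕ × ℕ =>
        (∑ k₁ ∈ Finset.Icc 1 n.1, ∑ k₂ ∈ Finset.Icc 1 n.2, x (k₁, k₂)) / b n)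
      Filter.atTop (nhds L) := by
  have hx1 : ∀ j : ℕ, x (1, j) = -(j : ℝ) := fun j => by rw [hx]; norm_num
  have hx2 : ∀ j : ℕ, x (2, j) = 2 * (j : ℝ) := fun j => by rw [hx]; norm_num
  have hx0 : ∀ k j : ℕ, 3 ≤ k → x (k, j) = 0 := by
    intro k j hk
    rw [hx]
    have h1 : ((k, j) : ℕ × ℕ).1 ≠ 1 := by simp; omega
    have h2 : ((k, j) : ℕ × ℕ).1 ≠ 2 := by simp; omega
    rw [if_neg h1, if_neg h2]
  have key2 : ∀ n₁ n₂ : ℕ, 2 ≤ n₁ → 1 ≤ n₂ →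
      (∑ k₁ ∈ Finset.Icc 1 n₁, ∑ k₂ ∈ Finset.Icc 1 n₂, x (k₁, k₂)) / b (n₁, n₂) =
        ((n₂ : ℝ) + 1) / (2 * n₁) := by
    intro n₁ n₂ h1 h2
    have hsum : (∑ k₁ ∈ Finset.Icc 1 n₁, ∑ k₂ ∈ Finset.Icc 1 n₂, x (k₁, k₂)) =
        (n₂ : ℝ) * (n₂ + 1) / 2 := by
      rw [sum_two h1 (fun k hk => Finset.sum_eq_zero fun j _ => hx0 k j hk)]
      have e1 : ∑ k₂ ∈ Finset.Icc 1 n₂, x (1, k₂) = -((n₂ : ℝ) * (n₂ + 1) / 2) := by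
        rw [Finset.sum_congr rfl fun k _ => hx1 k, Finset.sum_neg_distrib, gauss_icc]
      have e2 : ∑ k₂ ∈ Finset.Icc 1 n₂, x (2, k₂) = (n₂ : ℝ) * (n₂ + 1) := by
        rw [Finset.sum_congr rfl fun k _ => hx2 k, ← Finset.mul_sum, gauss_icc]
        ring
      rw [e1, e2]; ring
    rw [hsum, hb]
    have hn1 : (n₁ : ℝ) ≠ 0 := by positivity
    have hn2 : (n₂ : ℝ) ≠ 0 := by
      have : (0:ℝ) < n₂ := by exact_mod_cast h2
      positivity
    show (n₂ : ℝ) * (n₂ + 1) / 2 / ((n₁ : ℝ) * n₂) = ((n₂ : ℝ) + 1) / (2 * n₁)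
    field_simp
  refine ⟨?_, key2, ?_⟩
  · intro n₁ n₂ h1 h2
    rw [sum_two h1 (fun k hk => Finset.sum_eq_zero fun j _ => by rw [hx0 k j hk, zero_div])]
    have e1 : ∑ k₂ ∈ Finset.Icc 1 n₂, x (1, k₂) / b (1, k₂) = -(n₂ : ℝ) := by
      have h : ∀ k ∈ Finset.Icc 1 n₂, x (1, k) / b (1, k) = -1 := by
        intro k hk
        have hk1 : 1 ≤ k := (Finset.mem_Icc.mp hk).1
        have hk0 : (k : ℝ) ≠ 0 := by positivity
        rw [hx1, hb]
        show -(k : ℝ) / (((1:ℕ) : ℝ) * k) = -1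
        field_simp
        norm_num
      rw [Finset.sum_congr rfl h, Finset.sum_const, Nat.card_Icc]
      simp
    have e2 : ∑ k₂ ∈ Finset.Icc 1 n₂, x (2, k₂) / b (2, k₂) = (n₂ : ℝ) := by
      have h : ∀ k ∈ Finset.Icc 1 n₂, x (2, k) / b (2, k) = 1 := by
        intro k hk
        have hk1 : 1 ≤ k := (Finset.mem_Icc.mp hk).1
        have hk0 : (k : ℝ) ≠ 0 := by positivity
        rw [hx2, hb]
        show 2 * (k : ℝ) / (((2:ℕ) : ℝ) * k) = 1
        push_cast
        field_simp
      rw [Finset.sum_congr rfl h, Finset.sum_const, Nat.card_Icc]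
      simp
    rw [e1, e2]; ring
  · rintro ⟨L, hL⟩
    have hdiag : Tendsto (fun m : ℕ => (m, m)) atTop (atTop : Filter (ℕ × ℕ)) := by
      rw [← prod_atTop_atTop_eq]
      exact tendsto_id.prodMk tendsto_id
    have hsq : Tendsto (fun m : ℕ => (m ^ 2, m)) atTop (atTop : Filter (ℕ × ℕ)) := by
      rw [← prod_atTop_atTop_eq]
      exact (tendsto_atTop_atTop.mpr fun c =>
        ⟨c, fun a ha => le_trans ha (Nat.le_self_pow two_ne_zero a)⟩).prodMk tendsto_id
    have half : Tendsto (fun m : ℕ => ((m : ℝ) + 1) / (2 * m)) atTop (nhds (1/2)) := by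
      have h0 : Tendsto (fun m : ℕ => 1/2 + (1/2) * (1 / (m:ℝ))) atTop (nhds (1/2)) := by
        have h1 := (tendsto_one_div_atTop_nhds_zero_nat.const_mul (1/2 : ℝ)).const_add
          (1/2 : ℝ)
        simpa using h1
      refine h0.congr' ?_
      filter_upwards [eventually_ge_atTop 1] with m hm
      have : (m : ℝ) ≠ 0 := by positivity
      field_simp
    have zero : Tendsto (fun m : ℕ => ((m : ℝ) + 1) / (2 * (m:ℝ)^2)) atTop (nhds 0) := by
      have h0 := half.mul tendsto_one_div_atTop_nhds_zero_nat
      rw [mul_zero] at h0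
      refine h0.congr' ?_
      filter_upwards [eventually_ge_atTop 1] with m hm
      rw [div_mul_div_comm, mul_one]
      congr 1
      ring
    have l1 : L = 1/2 := by
      refine tendsto_nhds_unique ?_ half
      refine (hL.comp hdiag).congr' ?_
      filter_upwards [eventually_ge_atTop 2] with m hm
      exact key2 m m hm (by omega)
    have l2 : L = 0 := by
      refine tendsto_nhds_unique ?_ zero
      refine (hL.comp hsq).congr' ?_
      filter_upwards [eventually_ge_atTop 2] with m hm
      have h := key2 (m ^ 2) m (by nlinarith) (by omega)
      simpa [Function.comp] using h
    rw [l1] at l2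
    norm_num at l2
end
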